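/- arXiv:1107.2435 — 5 statements merged into one kernel-verified Lean document; each statement's English description precedes it below -/
import Mathlib

section
/- Let μ be a nonzero positive Radon measure on ℝ that is doubling, let u : ℝ → ℝ satisfy u(b) − u(a) = μ([a,b]) for all a < b, and let v : ℝ → ℝ belong to the generalized Zygmund class Λ_μ. Set Γ(t) = u(t) + i v(t). Then there exists a constant H ≥ 1 such that |Γ(x) − Γ(a)| ≤ H |Γ(x) − Γ(b)| for all a, b, x ∈ ℝ with |x − a| ≤ |x − b|. -/
open MeasureTheory Set Filter Topology

/-- `μ` is doubling with constant `1 + δ`: for any two adjacent intervals of equal length,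
the measure of one is at most `1 + δ` times the measure of the other. -/
def DoublingWith (δ : ℝ) (μ : Measure ℝ) : Prop :=
  ∀ x h : ℝ, 0 < h →
    μ (Icc (x - h) x) ≤ ENNReal.ofReal (1 + δ) * μ (Icc x (x + h)) ∧
    μ (Icc x (x + h)) ≤ ENNReal.ofReal (1 + δ) * μ (Icc (x - h) x)

/-- `μ` is a doubling measure. -/
def IsDoubling (μ : Measure ℝ) : Prop := ∃ δ > 0, DoublingWith δ μ

/-- `g` belongs to the generalized Zygmund class `Λ_μ`. -/
def MemGenZygmund (μ : Measure ℝ) (g : ℝ → ℝ) : Prop :=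
  Continuous g ∧ ∃ M > 0, ∀ x h : ℝ, 0 ≤ h →
    |g (x + h) - 2 * g x + g (x - h)| ≤ M * (μ (Icc (x - h) (x + h))).toReal

private lemma abs_sub'' (a b : ℝ) : |a - b| ≤ |a| + |b| := by
  rw [sub_eq_add_neg]
  exact (abs_add_le a (-b)).trans (by rw [abs_neg])

private lemma toReal_mul_helper {A B : ENNReal} {c : ℝ} (hc : 0 ≤ c) (hB : B ≠ ⊤)
    (h : A ≤ ENNReal.ofReal c * B) : A.toReal ≤ c * B.toReal := by
  have hfin : ENNReal.ofReal c * B ≠ ⊤ := ENNReal.mul_ne_top ENNReal.ofReal_ne_top hB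
  calc A.toReal ≤ (ENNReal.ofReal c * B).toReal := ENNReal.toReal_mono hfin h
    _ = c * B.toReal := by rw [ENNReal.toReal_mul, ENNReal.toReal_ofReal hc]

private lemma noatom {μ : Measure ℝ} [IsLocallyFiniteMeasure μ] {δ : ℝ} (hδ : 0 < δ)
    (hdb : DoublingWith δ μ) (p : ℝ) : μ {p} = 0 := by
  set s : ℕ → Set ℝ := fun k => Ioc p (p + (1/2)^k) with hs
  have hanti : Antitone s := by
    intro i j hij
    apply Ioc_subset_Ioc le_rfl
    have := pow_le_pow_of_le_one (by norm_num : (0:ℝ) ≤ 1/2) (by norm_num : (1:ℝ)/2 ≤ 1) hij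
    linarith
  have hfin : ∃ k, μ (s k) ≠ ⊤ := by
    refine ⟨0, ?_⟩
    exact ne_top_of_le_ne_top (isCompact_Icc.measure_lt_top).ne
      (measure_mono (Ioc_subset_Icc_self : s 0 ⊆ Icc p (p + (1/2)^0)))
  have htend := tendsto_measure_iInter_atTop
    (fun k => measurableSet_Ioc.nullMeasurableSet) hanti hfin
  have hempty : (⋂ k, s k) = ∅ := by
    ext y
    simp only [hs, mem_iInter, mem_Ioc, mem_empty_iff_false, iff_false, not_forall]
    by_contra hcon
    push_neg at hcon
    obtain ⟨k, hk⟩ := exists_pow_lt_of_lt_one (sub_pos.mpr (hcon 0).1)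
      (by norm_num : (1:ℝ)/2 < 1)
    have := (hcon k).2
    linarith
  rw [hempty, measure_empty] at htend
  have hb : ∀ k : ℕ, μ {p} ≤ ENNReal.ofReal (1+δ) * μ (s k) := by
    intro k
    have h0 : (0:ℝ) < (1/2)^(k+1) := by positivity
    have h2 := (hdb (p + (1/2)^(k+1)) ((1/2)^(k+1)) h0).1
    have e1 : p + (1/2)^(k+1) - (1/2)^(k+1) = p := by ring
    rw [e1] at h2
    have h1 : μ {p} ≤ μ (Icc p (p + (1/2)^(k+1))) :=
      measure_mono (singleton_subset_iff.mpr (left_mem_Icc.mpr (by linarith)))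
    have h3 : Icc (p + (1/2)^(k+1)) (p + (1/2)^(k+1) + (1/2)^(k+1)) ⊆ s k := by
      intro y hy
      have hpow : (1/2:ℝ)^(k+1) + (1/2)^(k+1) = (1/2)^k := by
        rw [pow_succ]; ring
      constructor
      · linarith [hy.1]
      · have := hy.2; linarith
    calc μ {p} ≤ μ (Icc p (p + (1/2)^(k+1))) := h1
      _ ≤ ENNReal.ofReal (1+δ) * μ (Icc (p + (1/2)^(k+1)) (p + (1/2)^(k+1) + (1/2)^(k+1))) := h2
      _ ≤ ENNReal.ofReal (1+δ) * μ (s k) := mul_le_mul_right (measure_mono h3) _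
  have hlim2 : Tendsto (fun k => ENNReal.ofReal (1+δ) * μ (s k)) atTop (𝓝 0) := by
    have h2 : Tendsto (fun k => ENNReal.ofReal (1+δ) * μ (s k)) atTop
        (𝓝 (ENNReal.ofReal (1+δ) * 0)) :=
      ENNReal.Tendsto.const_mul htend (Or.inr ENNReal.ofReal_ne_top)
    rwa [mul_zero] at h2
  have := ge_of_tendsto' hlim2 hb
  exact le_antisymm this zero_le

private lemma icc_split {μ : Measure ℝ} [IsLocallyFiniteMeasure μ]
    (hat : ∀ p : ℝ, μ {p} = 0) {X P Q : ℝ} (h1 : X ≤ P) (h2 : P ≤ Q) :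
    (μ (Icc X Q)).toReal = (μ (Icc X P)).toReal + (μ (Icc P Q)).toReal := by
  have h := measure_union_add_inter (μ := μ) (Icc X P)
    (measurableSet_Icc : MeasurableSet (Icc P Q))
  rw [Icc_union_Icc_eq_Icc h1 h2, Icc_inter_Icc_eq_singleton h1 h2, hat, add_zero] at h
  rw [h, ENNReal.toReal_add (isCompact_Icc.measure_lt_top).ne (isCompact_Icc.measure_lt_top).ne]

private lemma chain_lemma (M δ L : ℝ) (hM : 0 < M) (hδ : 0 < δ) (hL : 0 < L)
    (D mm : ℝ → ℝ)
    (hD0 : D 0 = 0)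
    (hDcont : ContinuousOn (fun t => |D t|) (Icc 0 L))
    (hmm0 : ∀ q, 0 ≤ q → 0 ≤ mm q)
    (hmono : ∀ p q, 0 ≤ p → p ≤ q → mm p ≤ mm q)
    (hdblL : mm (2*L) ≤ (2+δ) * mm L)
    (hzyg : ∀ c r : ℝ, 0 ≤ r → r ≤ c → |D (c+r) - 2*D c + D (c-r)| ≤ M * (mm (c+r) - mm (c-r))) :
    ∀ h, 0 ≤ h → h ≤ L → |D h| ≤ 2*|D L| + 5*((2+δ)*M*mm L) := by
  obtain ⟨t0, ht0, hmax⟩ := isCompact_Icc.exists_isMaxOn (nonempty_Icc.mpr hL.le) hDcont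
  set P := |D t0| with hP
  have hPub : ∀ t, 0 ≤ t → t ≤ L → |D t| ≤ P := fun t h1 h2 => hmax ⟨h1, h2⟩
  set c := (2+δ)*M*mm L with hc
  have hmmL : 0 ≤ mm L := hmm0 L hL.le
  have hcnn : 0 ≤ c := by
    rw [hc]
    exact mul_nonneg (mul_nonneg (by linarith) hM.le) hmmL
  have hPnn : 0 ≤ P := abs_nonneg _
  have hDLP : |D L| ≤ P := hPub L hL.le le_rfl
  set G := 2*|D L| + P + c with hG
  have hGnn : 0 ≤ G := by
    rw [hG]; linarith [abs_nonneg (D L)]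
  have hMbound : ∀ q, 0 ≤ q → q ≤ 2*L → M * mm q ≤ c := by
    intro q h1 h2
    have e1 := hmono q (2*L) h1 h2
    have e2 := mul_le_mul_of_nonneg_left e1 hM.le
    have e3 := mul_le_mul_of_nonneg_left hdblL hM.le
    rw [hc]; nlinarith
  have stepA : ∀ t, 0 < t → t ≤ L → 2*|D t| ≤ |D (2*t)| + c := by
    intro t ht htL
    have h1 := hzyg t t ht.le le_rfl
    rw [sub_self, hD0, add_zero] at h1
    have e0 : t + t = 2*t := by ring
    rw [e0] at h1
    have h2 : M * (mm (2*t) - mm 0) ≤ c := by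
      have hb := hMbound (2*t) (by linarith) (by linarith)
      have h00 := mul_nonneg hM.le (hmm0 0 le_rfl)
      nlinarith
    have h3 : |D (2*t) - 2*D t| ≤ c := h1.trans h2
    have h4 := abs_sub_abs_le_abs_sub (2*D t) (D (2*t))
    rw [abs_sub_comm] at h4
    have h5 : |2*D t| = 2*|D t| := by
      rw [abs_mul]; norm_num
    linarith
  have stepB : ∀ s, L ≤ s → s ≤ 2*L → |D s| ≤ G := by
    intro s h1 h2
    have hr0 : 0 ≤ s - L := by linarith
    have hz := hzyg L (s - L) hr0 (by linarith)
    have e1 : L + (s - L) = s := by ring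
    rw [e1] at hz
    have hLr1 : 0 ≤ L - (s - L) := by linarith
    have hLr2 : L - (s - L) ≤ L := by linarith
    have hmm1 : 0 ≤ mm (L - (s - L)) := hmm0 _ hLr1
    have hbound : M * (mm s - mm (L - (s-L))) ≤ c := by
      have := hMbound s (by linarith) h2
      nlinarith [mul_nonneg hM.le hmm1]
    have hz2 : |D s - 2*D L + D (L - (s-L))| ≤ c := hz.trans hbound
    have hDsm : |D (L - (s - L))| ≤ P := hPub _ hLr1 hLr2
    have t1 : D s = (D s - 2*D L + D (L-(s-L))) + 2*D L - D (L-(s-L)) := by ring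
    have h4 : |D s| ≤ |D s - 2*D L + D (L-(s-L))| + |2*D L| + |D (L-(s-L))| := by
      calc |D s| = |((D s - 2*D L + D (L-(s-L))) + 2*D L) - D (L-(s-L))| := by rw [← t1]
        _ ≤ |(D s - 2*D L + D (L-(s-L))) + 2*D L| + |D (L-(s-L))| := abs_sub'' _ _
        _ ≤ (|D s - 2*D L + D (L-(s-L))| + |2*D L|) + |D (L-(s-L))| := by
            exact add_le_add (abs_add_le _ _) le_rfl
        _ = _ := by ring
    have h5 : |2*D L| = 2*|D L| := by rw [abs_mul]; norm_num
    rw [hG]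
    linarith
  have key : ∀ k : ℕ, ∀ t, 0 < t → t ≤ L → L < 2^k * t → |D t| ≤ G/2 + 2*c := by
    intro k
    induction k with
    | zero =>
      intro t ht htL hlt
      rw [pow_zero, one_mul] at hlt
      linarith
    | succ k ih =>
      intro t ht htL hlt
      have hA := stepA t ht htL
      by_cases h2t : 2*t ≤ L
      · have e : (2:ℝ)^(k+1) * t = 2^k * (2*t) := by rw [pow_succ]; ring
        rw [e] at hlt
        have := ih (2*t) (by linarith) h2t hlt
        linarith
      · have hB := stepB (2*t) (by linarith) (by linarith)
        linarith
  have hPbound : P ≤ 2*|D L| + 5*c := by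
    rcases eq_or_lt_of_le ht0.1 with h0 | h0
    · rw [hP, ← h0, hD0, abs_zero]
      linarith [abs_nonneg (D L)]
    · obtain ⟨k, hk⟩ := pow_unbounded_of_one_lt (L / t0) (by norm_num : (1:ℝ) < 2)
      have hk' : L < 2^k * t0 := by
        rw [div_lt_iff₀ h0] at hk
        linarith
      have := key k t0 h0 ht0.2 hk'
      rw [hG] at this
      linarith
  intro h hh hhL
  have := hPub h hh hhL
  rw [hc] at hPbound
  linarith

set_option maxHeartbeats 1000000 in
private lemma main_side (δ M : ℝ) (hδ : 0 < δ) (hM : 0 < M)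
    (u v : ℝ → ℝ) (m : ℝ → ℝ → ℝ)
    (hm0 : ∀ p q : ℝ, 0 ≤ m p q)
    (hma : ∀ p q r : ℝ, p ≤ q → q ≤ r → m p r = m p q + m q r)
    (hmd : ∀ y h : ℝ, 0 < h → m (y - h) y ≤ (1+δ) * m y (y+h) ∧ m y (y+h) ≤ (1+δ) * m (y-h) y)
    (huu : ∀ p q : ℝ, p ≤ q → u q - u p = m p q)
    (hzv : ∀ y h : ℝ, 0 ≤ h → |v (y+h) - 2*v y + v (y-h)| ≤ M * m (y-h) (y+h))
    (hvc : Continuous v)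
    (x b : ℝ) (hxb : x < b) :
    ∀ a : ℝ, |x - a| ≤ b - x →
      ‖((u x : ℂ) + Complex.I * (v x : ℂ)) - ((u a : ℂ) + Complex.I * (v a : ℂ))‖
        ≤ (2*(3 + δ + 6*((2+δ)*M))) * ‖((u x : ℂ) + Complex.I * (v x : ℂ)) -
            ((u b : ℂ) + Complex.I * (v b : ℂ))‖ := by
  intro a ha
  have hH : 0 < b - x := sub_pos.mpr hxb
  have hCnn : (0:ℝ) ≤ (2+δ)*M := mul_nonneg (by linarith) hM.le
  -- chain lemma instantiation on the right side of x
  have hmm0 : ∀ q : ℝ, 0 ≤ q → 0 ≤ m x (x+q) := fun q _ => hm0 _ _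
  have hmono : ∀ p q : ℝ, 0 ≤ p → p ≤ q → m x (x+p) ≤ m x (x+q) := by
    intro p q hp hpq
    have h1 := hma x (x+p) (x+q) (by linarith) (by linarith)
    have h2 := hm0 (x+p) (x+q)
    linarith
  have hdblL : m x (x + 2*(b-x)) ≤ (2+δ) * m x (x+(b-x)) := by
    have e1 := hma x (x+(b-x)) (x+2*(b-x)) (by linarith) (by linarith)
    have e2 := (hmd (x+(b-x)) (b-x) hH).2
    have e3 : x + (b-x) + (b-x) = x + 2*(b-x) := by ring
    have e4 : x + (b-x) - (b-x) = x := by ring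
    rw [e3, e4] at e2
    linarith [hm0 x (x+(b-x))]
  have hzyg : ∀ c r : ℝ, 0 ≤ r → r ≤ c →
      |(v (x+(c+r)) - v x) - 2*(v (x+c) - v x) + (v (x+(c-r)) - v x)|
        ≤ M * (m x (x+(c+r)) - m x (x+(c-r))) := by
    intro c r hr hrc
    have h1 := hzv (x+c) r hr
    have e1 : x + c + r = x + (c+r) := by ring
    have e2 : x + c - r = x + (c-r) := by ring
    rw [e1, e2] at h1
    have e3 : (v (x+(c+r)) - v x) - 2*(v (x+c) - v x) + (v (x+(c-r)) - v x)
        = v (x+(c+r)) - 2*v (x+c) + v (x+(c-r)) := by ring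
    rw [e3]
    have e4 : m x (x+(c+r)) - m x (x+(c-r)) = m (x+(c-r)) (x+(c+r)) := by
      have := hma x (x+(c-r)) (x+(c+r)) (by linarith) (by linarith)
      linarith
    rw [e4]
    exact h1
  have hchain := chain_lemma M δ (b-x) hM hδ hH (fun t => v (x+t) - v x) (fun q => m x (x+q))
    (by simp)
    (((hvc.comp (continuous_const.add continuous_id)).sub continuous_const).abs.continuousOn)
    hmm0 hmono hdblL hzyg
  -- facts about b
  have eb : x + (b - x) = b := by ring
  have hub : u b - u x = m x (x+(b-x)) := by rw [eb]; exact huu x b hxb.le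
  set R := ‖((u x : ℂ) + Complex.I * (v x : ℂ)) - ((u b : ℂ) + Complex.I * (v b : ℂ))‖
    with hR
  have hRnn : 0 ≤ R := norm_nonneg _
  have hre : ((((u x : ℂ) + Complex.I * (v x : ℂ)) -
      ((u b : ℂ) + Complex.I * (v b : ℂ)))).re = u x - u b := by simp
  have him : ((((u x : ℂ) + Complex.I * (v x : ℂ)) -
      ((u b : ℂ) + Complex.I * (v b : ℂ)))).im = v x - v b := by simp
  have hmmR : m x (x+(b-x)) ≤ R := by
    have h1 := Complex.abs_re_le_norm ((((u x : ℂ) + Complex.I * (v x : ℂ)) -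
      ((u b : ℂ) + Complex.I * (v b : ℂ))))
    rw [hre] at h1
    calc m x (x+(b-x)) ≤ |m x (x+(b-x))| := le_abs_self _
      _ = |u b - u x| := by rw [hub]
      _ = |u x - u b| := abs_sub_comm _ _
      _ ≤ R := h1
  have hDR : |v (x+(b-x)) - v x| ≤ R := by
    have h1 := Complex.abs_im_le_norm ((((u x : ℂ) + Complex.I * (v x : ℂ)) -
      ((u b : ℂ) + Complex.I * (v b : ℂ))))
    rw [him] at h1
    rw [eb, abs_sub_comm]
    exact h1
  -- main case analysis on a
  rcases eq_or_ne a x with rfl | hax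
  · simp only [sub_self, map_zero, norm_zero]
    have : (0:ℝ) ≤ (3 + δ + 6*((2+δ)*M)) := by nlinarith
    nlinarith
  have hre2 : ((((u x : ℂ) + Complex.I * (v x : ℂ)) -
      ((u a : ℂ) + Complex.I * (v a : ℂ)))).re = u x - u a := by simp
  have him2 : ((((u x : ℂ) + Complex.I * (v x : ℂ)) -
      ((u a : ℂ) + Complex.I * (v a : ℂ)))).im = v x - v a := by simp
  have hLHS : ‖((u x : ℂ) + Complex.I * (v x : ℂ)) -
      ((u a : ℂ) + Complex.I * (v a : ℂ))‖ ≤ |u x - u a| + |v x - v a| := by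
    have := Complex.norm_le_abs_re_add_abs_im ((((u x : ℂ) + Complex.I * (v x : ℂ)) -
      ((u a : ℂ) + Complex.I * (v a : ℂ))))
    rw [hre2, him2] at this
    exact this
  have hkey : |u x - u a| + |v x - v a|
      ≤ (1+δ+6*((2+δ)*M)) * m x (x+(b-x)) + 2 * |v (x+(b-x)) - v x| := by
    rcases hax.lt_or_gt with haxlt | haxgt
    · -- a < x
      have hh'pos : 0 < x - a := sub_pos.mpr haxlt
      have hh'H : x - a ≤ b - x := by
        rwa [abs_of_pos hh'pos] at ha
      have hu1 : |u x - u a| = m a x := by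
        rw [huu a x haxlt.le, abs_of_nonneg (hm0 a x)]
      have hmd1 := (hmd x (x-a) hh'pos).1
      rw [show x - (x-a) = a from by ring] at hmd1
      -- hmd1 : m a x ≤ (1+δ) * m x (x+(x-a))
      have hmono1 : m x (x+(x-a)) ≤ m x (x+(b-x)) := hmono _ _ hh'pos.le hh'H
      have hz := hzv x (x-a) hh'pos.le
      rw [show x - (x-a) = a from by ring] at hz
      -- hz : |v (x+(x-a)) - 2*v x + v a| ≤ M * m a (x+(x-a))
      have hsplit : m a (x+(x-a)) = m a x + m x (x+(x-a)) :=
        hma a x (x+(x-a)) haxlt.le (by linarith)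
      have hva : |v x - v a| ≤ |v (x+(x-a)) - v x| + M * (m a x + m x (x+(x-a))) := by
        have e : v x - v a = (v (x+(x-a)) - v x) - (v (x+(x-a)) - 2*v x + v a) := by ring
        rw [e]
        have := abs_sub'' (v (x+(x-a)) - v x) (v (x+(x-a)) - 2*v x + v a)
        rw [hsplit] at hz
        linarith
      have hch := hchain (x-a) hh'pos.le hh'H
      have hp1 : M * m a x ≤ M * ((1+δ) * m x (x+(x-a))) :=
        mul_le_mul_of_nonneg_left hmd1 hM.le
      have hp2 : (2+δ)*M * m x (x+(x-a)) ≤ (2+δ)*M * m x (x+(b-x)) :=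
        mul_le_mul_of_nonneg_left hmono1 hCnn
      have hp3 : m a x ≤ (1+δ) * m x (x+(b-x)) := by
        have := mul_le_mul_of_nonneg_left hmono1 (by linarith : (0:ℝ) ≤ 1+δ)
        linarith
      nlinarith [hm0 x (x+(x-a)), hm0 a x]
    · -- x < a
      have hh'pos : 0 < a - x := sub_pos.mpr haxgt
      have hh'H : a - x ≤ b - x := by
        rw [abs_sub_comm, abs_of_pos hh'pos] at ha
        exact ha
      have ea : x + (a - x) = a := by ring
      have hu1 : |u x - u a| = m x (x+(a-x)) := by
        rw [abs_sub_comm, huu x a haxgt.le, ea, abs_of_nonneg (hm0 x a)]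
      have hv1 : |v x - v a| = |v (x+(a-x)) - v x| := by
        rw [ea, abs_sub_comm]
      have hch := hchain (a-x) hh'pos.le hh'H
      have hmono1 : m x (x+(a-x)) ≤ m x (x+(b-x)) := hmono _ _ hh'pos.le hh'H
      rw [hu1, hv1]
      nlinarith [hm0 x (x+(b-x)), abs_nonneg (v (x+(b-x)) - v x)]
  have c1 : (0:ℝ) ≤ 1+δ+6*((2+δ)*M) := by nlinarith
  have c2 : (1+δ+6*((2+δ)*M)) * m x (x+(b-x)) ≤ (1+δ+6*((2+δ)*M)) * R :=
    mul_le_mul_of_nonneg_left hmmR c1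
  have c3 : (0:ℝ) ≤ (3+δ+6*((2+δ)*M)) * R := mul_nonneg (by nlinarith) hRnn
  nlinarith [hLHS, hkey, hDR]

set_option maxHeartbeats 1000000 in
/-- If `μ` is a nonzero doubling Radon measure on `ℝ`, `u` is an antiderivative of `μ`
and `v ∈ Λ_μ`, then `Γ(t) = u(t) + i v(t)` satisfies the three-point condition
`|Γ(x) − Γ(a)| ≤ H |Γ(x) − Γ(b)|` whenever `|x − a| ≤ |x − b|`. -/
theorem three_point_condition_of_genZygmund
    (μ : Measure ℝ) [IsLocallyFiniteMeasure μ] (hμ0 : μ ≠ 0)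
    (hdbl : IsDoubling μ) (u v : ℝ → ℝ)
    (hu : ∀ a b : ℝ, a < b → u b - u a = (μ (Icc a b)).toReal)
    (hv : MemGenZygmund μ v) :
    ∃ H : ℝ, 1 ≤ H ∧ ∀ a b x : ℝ, |x - a| ≤ |x - b| →
      ‖((u x : ℂ) + Complex.I * (v x : ℂ)) - ((u a : ℂ) + Complex.I * (v a : ℂ))‖
        ≤ H * ‖((u x : ℂ) + Complex.I * (v x : ℂ)) -
            ((u b : ℂ) + Complex.I * (v b : ℂ))‖ := by
  obtain ⟨δ, hδ, hdb⟩ := hdbl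
  obtain ⟨hvc, M, hM, hzy⟩ := hv
  have hat : ∀ p : ℝ, μ {p} = 0 := noatom hδ hdb
  have hfin : ∀ p q : ℝ, μ (Icc p q) ≠ ⊤ := fun p q => (isCompact_Icc.measure_lt_top).ne
  have hm0 : ∀ p q : ℝ, 0 ≤ (μ (Icc p q)).toReal := fun p q => ENNReal.toReal_nonneg
  have hma : ∀ p q r : ℝ, p ≤ q → q ≤ r →
      (μ (Icc p r)).toReal = (μ (Icc p q)).toReal + (μ (Icc q r)).toReal :=
    fun p q r h1 h2 => icc_split hat h1 h2
  have hmd : ∀ y h : ℝ, 0 < h →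
      (μ (Icc (y-h) y)).toReal ≤ (1+δ) * (μ (Icc y (y+h))).toReal ∧
      (μ (Icc y (y+h))).toReal ≤ (1+δ) * (μ (Icc (y-h) y)).toReal := by
    intro y h hh
    obtain ⟨d1, d2⟩ := hdb y h hh
    exact ⟨toReal_mul_helper (by linarith) (hfin _ _) d1,
      toReal_mul_helper (by linarith) (hfin _ _) d2⟩
  have hu' : ∀ p q : ℝ, p ≤ q → u q - u p = (μ (Icc p q)).toReal := by
    intro p q h
    rcases eq_or_lt_of_le h with rfl | hlt
    · rw [sub_self, Icc_self, hat]
      simp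
    · exact hu p q hlt
  have hzv : ∀ y h : ℝ, 0 ≤ h →
      |v (y+h) - 2*v y + v (y-h)| ≤ M * (μ (Icc (y-h) (y+h))).toReal := by
    intro y h hh
    exact hzy y h hh
  refine ⟨2*(3 + δ + 6*((2+δ)*M)), by nlinarith, ?_⟩
  intro a b x hab
  rcases lt_trichotomy x b with hxb | hxb | hxb
  · have hab' : |x - a| ≤ b - x := by
      rwa [abs_sub_comm x b, abs_of_pos (sub_pos.mpr hxb)] at hab
    exact main_side δ M hδ hM u v (fun p q => (μ (Icc p q)).toReal)
      hm0 hma hmd hu' hzv hvc x b hxb a hab'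
  · -- x = b
    have h0 : |x - a| ≤ 0 := by
      rw [hxb] at hab ⊢
      simpa using hab
    have hax : b = a := by
      rw [← hxb]
      have := abs_nonpos_iff.mp h0
      linarith [sub_eq_zero.mp this]
    subst hxb
    rw [← hax]
    simp
  · -- b < x : apply main_side to the reflected configuration
    have happ := main_side δ M hδ hM (fun t => -u (-t)) (fun t => v (-t))
      (fun p q => (μ (Icc (-q) (-p))).toReal)
      (fun p q => hm0 _ _)
      (by
        intro p q r h1 h2
        have := hma (-r) (-q) (-p) (by linarith) (by linarith)
        linarith)
      (by
        intro y h hh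
        obtain ⟨d1, d2⟩ := hmd (-y) h hh
        constructor
        · have e1 : -(y - h) = -y + h := by ring
          have e2 : -(y + h) = -y - h := by ring
          simp only [e1, e2]
          exact d2
        · have e1 : -(y - h) = -y + h := by ring
          have e2 : -(y + h) = -y - h := by ring
          simp only [e1, e2]
          exact d1)
      (by
        intro p q h
        have := hu' (-q) (-p) (by linarith)
        beta_reduce
        linarith)
      (by
        intro y h hh
        have hz := hzv (-y) h hh
        have e1 : -(y+h) = -y - h := by ring
        have e2 : -(y-h) = -y + h := by ring
        simp only [e1, e2]
        have e3 : v (-y - h) - 2*v (-y) + v (-y + h)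
            = v (-y + h) - 2*v (-y) + v (-y - h) := by ring
        rw [e3]
        exact hz)
      (hvc.comp continuous_neg)
      (-x) (-b) (by linarith) (-a)
      (by
        have e1 : -x - -a = -(x - a) := by ring
        rw [e1, abs_neg]
        have e2 : -b - -x = x - b := by ring
        rw [e2]
        rwa [abs_of_pos (sub_pos.mpr hxb)] at hab)
    simp only [neg_neg] at happ
    have habs : ∀ p q r s : ℝ,
        ‖(((-p : ℝ) : ℂ) + Complex.I * (q : ℂ)) - (((-r : ℝ) : ℂ) + Complex.I * (s : ℂ))‖
          = ‖((p : ℝ) : ℂ) + Complex.I * (q : ℂ) - (((r : ℝ) : ℂ) + Complex.I * (s : ℂ))‖ := by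
      intro p q r s
      have he : ((((-p : ℝ) : ℂ) + Complex.I * (q : ℂ)) - (((-r : ℝ) : ℂ) + Complex.I * (s : ℂ)))
          = -((starRingEnd ℂ) ((((p : ℝ) : ℂ) + Complex.I * (q : ℂ)) - (((r : ℝ) : ℂ) + Complex.I * (s : ℂ)))) := by
        simp only [Complex.ext_iff, Complex.sub_re, Complex.add_re, Complex.ofReal_re,
          Complex.mul_re, Complex.I_re, Complex.I_im, Complex.ofReal_im, Complex.sub_im,
          Complex.add_im, Complex.mul_im, Complex.neg_re, Complex.neg_im, Complex.conj_re,
          Complex.conj_im, map_sub, map_add, Complex.conj_ofReal, Complex.conj_I]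
        constructor <;> ring
      rw [he, norm_neg, Complex.norm_conj]
    rw [← habs (u x) (v x) (u a) (v a), ← habs (u x) (v x) (u b) (v b)]
    exact happ
end

section
/- If f : ℂ → ℂ is a nonconstant delta-monotone map, then there exist a constant L ≥ 0 and an L-Lipschitz function g : ℝ → ℝ such that f(ℝ) = {u + i g(u) : u ∈ ℝ}; that is, the image of the real line under f is a Lipschitz graph over ℝ. -/
open Set
open Filter Topology Complex
noncomputable section
namespace DM

def inn (w v : ℂ) : ℝ := (w * (starRingEnd ℂ) v).re

lemma inn_def (w v : ℂ) : inn w v = w.re * v.re + w.im * v.im := by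
  simp [inn, Complex.mul_re]

lemma inn_le (w v : ℂ) : inn w v ≤ ‖w‖ * ‖v‖ := by
  calc inn w v ≤ ‖w * (starRingEnd ℂ) v‖ := Complex.re_le_norm _
  _ = ‖w‖ * ‖v‖ := by rw [norm_mul, Complex.norm_conj]

lemma inn_smul_right (w v : ℂ) (t : ℝ) : inn w ((t:ℂ) * v) = t * inn w v := by
  simp [inn_def]; ring

lemma inn_sub_left (a b v : ℂ) : inn (a - b) v = inn a v - inn b v := by
  simp [inn_def]; ring

lemma inn_add_right (w a b : ℂ) : inn w (a + b) = inn w a + inn w b := by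
  simp [inn_def]; ring

lemma inn_neg_right (w v : ℂ) : inn w (-v) = - inn w v := by
  simp [inn_def]; ring

lemma inn_neg_neg (w v : ℂ) : inn (-w) (-v) = inn w v := by
  simp [inn_def]

lemma cross_sq (w v : ℂ) : (inn w v)^2 + (inn w (Complex.I * v))^2 = ‖w‖^2 * ‖v‖^2 := by
  have h1 : ‖w‖^2 = w.re^2 + w.im^2 := by
    rw [Complex.sq_norm, Complex.normSq_apply]; ring
  have h2 : ‖v‖^2 = v.re^2 + v.im^2 := by
    rw [Complex.sq_norm, Complex.normSq_apply]; ring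
  rw [h1, h2]; simp [inn_def, Complex.mul_re, Complex.mul_im]; ring

lemma inn_continuous : Continuous (fun p : ℂ × ℂ => inn p.1 p.2) := by
  simp only [inn_def]; fun_prop

/-- The basic monotonicity inequality in product form. -/
def Mono (f : ℂ → ℂ) (δ : ℝ) : Prop :=
  ∀ z ζ : ℂ, z ≠ ζ → δ * (‖f z - f ζ‖ * ‖z - ζ‖) ≤ inn (f z - f ζ) (z - ζ)

variable {f : ℂ → ℂ} {δ : ℝ}

lemma mono_of_hf
    (hf : ∀ z ζ : ℂ, z ≠ ζ →
      δ * (‖f z - f ζ‖ / ‖z - ζ‖) ≤ ((f z - f ζ) / (z - ζ)).re) :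
    Mono f δ := by
  intro z ζ hne
  have hb : z - ζ ≠ 0 := sub_ne_zero.2 hne
  have habs : (0:ℝ) < ‖z - ζ‖ := by
    simpa using (norm_pos_iff.2 hb)
  have key : ((f z - f ζ) / (z - ζ)).re * (‖z - ζ‖)^2 = inn (f z - f ζ) (z - ζ) := by
    have h1 : (f z - f ζ) / (z - ζ) * ((Complex.normSq (z - ζ) : ℝ) : ℂ)
        = (f z - f ζ) * (starRingEnd ℂ) (z - ζ) := by
      rw [← Complex.mul_conj]
      field_simp
    have h2 : (((f z - f ζ) / (z - ζ)) * ((Complex.normSq (z - ζ) : ℝ) : ℂ)).re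
        = ((f z - f ζ) / (z - ζ)).re * Complex.normSq (z - ζ) := by
      simp [Complex.mul_re]
    rw [Complex.sq_norm]
    rw [← h2, h1]; rfl
  have := hf z ζ hne
  have h3 : δ * (‖f z - f ζ‖ / ‖z - ζ‖) * (‖z - ζ‖)^2
      ≤ ((f z - f ζ) / (z - ζ)).re * (‖z - ζ‖)^2 := by
    apply mul_le_mul_of_nonneg_right this (by positivity)
  rw [key] at h3
  calc δ * (‖f z - f ζ‖ * ‖z - ζ‖)
      = δ * (‖f z - f ζ‖ / ‖z - ζ‖) * (‖z - ζ‖)^2 := by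
        field_simp
    _ ≤ _ := h3

lemma mono_neg (hM : Mono f δ) : Mono (fun z => -f (-z)) δ := by
  intro z ζ hne
  have h := hM (-z) (-ζ) (by simpa using (fun h => hne (by simpa using congrArg Neg.neg h)))
  have e1 : (fun z => -f (-z)) z - (fun z => -f (-z)) ζ = -(f (-z) - f (-ζ)) := by ring_nf
  have e2 : z - ζ = -((-z) - (-ζ)) := by ring
  rw [e1]
  calc δ * (‖-(f (-z) - f (-ζ))‖ * ‖z - ζ‖)
      = δ * (‖f (-z) - f (-ζ)‖ * ‖(-z) - (-ζ)‖) := by rw [norm_neg, e2, norm_neg]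
    _ ≤ inn (f (-z) - f (-ζ)) ((-z) - (-ζ)) := h
    _ = inn (-(f (-z) - f (-ζ))) (z - ζ) := by
        rw [e2, inn_neg_neg]

lemma pair_limit (hδ : 0 < δ) (hM : Mono f δ) {p q : ℕ → ℂ} {A B e : ℂ}
    (hA : Tendsto (fun n => f (p n)) atTop (𝓝 A)) (hB : Tendsto (fun n => f (q n)) atTop (𝓝 B))
    (hne : ∀ᶠ n in atTop, p n ≠ q n)
    (hdir : Tendsto (fun n => (‖p n - q n‖⁻¹ : ℝ) • (p n - q n)) atTop (𝓝 e)) :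
    δ * ‖A - B‖ ≤ inn (A - B) e := by
  have hineq : ∀ᶠ n in atTop, δ * ‖f (p n) - f (q n)‖
      ≤ inn (f (p n) - f (q n)) ((‖p n - q n‖⁻¹ : ℝ) • (p n - q n)) := by
    filter_upwards [hne] with n hn
    have hb : (0:ℝ) < ‖p n - q n‖ := by
      simpa [norm_pos_iff] using sub_ne_zero.2 hn
    have h := hM (p n) (q n) hn
    rw [Complex.real_smul, inn_smul_right]
    rw [← mul_le_mul_iff_left₀ hb]
    calc δ * ‖f (p n) - f (q n)‖ * ‖p n - q n‖
        = δ * (‖f (p n) - f (q n)‖ * ‖p n - q n‖) := by ring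
      _ ≤ inn (f (p n) - f (q n)) (p n - q n) := h
      _ = ‖p n - q n‖⁻¹ * inn (f (p n) - f (q n)) (p n - q n) * ‖p n - q n‖ := by
          rw [mul_comm (‖p n - q n‖⁻¹) (inn (f (p n) - f (q n)) (p n - q n)), mul_assoc,
            inv_mul_cancel₀ hb.ne', mul_one]
  have hL : Tendsto (fun n => δ * ‖f (p n) - f (q n)‖) atTop (𝓝 (δ * ‖A - B‖)) := by
    exact (((hA.sub hB).norm).const_mul δ)
  have hR : Tendsto (fun n => inn (f (p n) - f (q n)) ((‖p n - q n‖⁻¹ : ℝ) • (p n - q n)))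
      atTop (𝓝 (inn (A - B) e)) := by
    exact (inn_continuous.tendsto (A - B, e)).comp ((hA.sub hB).prodMk_nhds hdir)
  exact le_of_tendsto_of_tendsto hL hR hineq

lemma dir_limit {v : ℕ → ℂ} {c : ℕ → ℝ} {e : ℂ} (hc : ∀ n, 0 < c n) (he : ‖e‖ = 1)
    (h : Tendsto (fun n => (c n)⁻¹ • v n) atTop (𝓝 e)) :
    (∀ᶠ n in atTop, v n ≠ 0) ∧ Tendsto (fun n => (‖v n‖⁻¹ : ℝ) • v n) atTop (𝓝 e) := by
  have hn : Tendsto (fun n => ‖(c n)⁻¹ • v n‖) atTop (𝓝 1) := by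
    simpa [he] using h.norm
  have hev : ∀ᶠ n in atTop, (1:ℝ)/2 < ‖(c n)⁻¹ • v n‖ := hn.eventually (eventually_gt_nhds (by norm_num))
  have hev' : ∀ᶠ n in atTop, v n ≠ 0 := by
    filter_upwards [hev] with n hn1
    intro h0
    rw [h0] at hn1
    simp at hn1; linarith
  refine ⟨hev', ?_⟩
  have hnorm_inv : Tendsto (fun n => ‖(c n)⁻¹ • v n‖⁻¹) atTop (𝓝 1) := by
    simpa using hn.inv₀ (by norm_num)
  have : Tendsto (fun n => (‖(c n)⁻¹ • v n‖⁻¹ : ℝ) • ((c n)⁻¹ • v n)) atTop (𝓝 ((1:ℝ) • e)) :=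
    hnorm_inv.smul h
  rw [one_smul] at this
  apply this.congr'
  filter_upwards [hev'] with n hvn
  have hcn := (hc n).ne'
  rw [norm_smul]
  simp only [norm_inv, Real.norm_eq_abs, abs_of_pos (hc n)]
  rw [smul_smul]
  congr 1
  have hv : ‖v n‖ ≠ 0 := by simpa using hvn
  field_simp


lemma ray_limit (hδ : 0 < δ) (hM : Mono f δ) {e z₀ : ℂ} (he : ‖e‖ = 1) {M₀ : ℝ}
    (hb : ∀ n : ℕ, inn (f (z₀ + (n:ℂ) * e)) e ≤ M₀) :
    ∃ G, Tendsto (fun n : ℕ => f (z₀ + (n:ℂ) * e)) atTop (𝓝 G) := by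
  set ψ : ℕ → ℂ := fun n => f (z₀ + (n:ℂ) * e) with hψ
  set φ : ℕ → ℝ := fun n => inn (ψ n) e with hφ
  have he0 : e ≠ 0 := by intro h; rw [h] at he; simp at he
  have step : ∀ m n : ℕ, m < n → δ * ‖ψ n - ψ m‖ ≤ φ n - φ m := by
    intro m n hmn
    have hd : ((n:ℝ) - m) > 0 := by
      have := (Nat.cast_lt (α := ℝ)).2 hmn; linarith
    have hzne : z₀ + (n:ℂ) * e ≠ z₀ + (m:ℂ) * e := by
      intro hcon
      have : ((n:ℂ) - m) * e = 0 := by ring_nf; linear_combination hcon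
      rcases mul_eq_zero.1 this with h | h
      · have hnm : (n:ℂ) = m := by linear_combination h
        have : n = m := by exact_mod_cast hnm
        omega
      · exact he0 h
    have h := hM _ _ hzne
    have hzd : (z₀ + (n:ℂ) * e) - (z₀ + (m:ℂ) * e) = (((n:ℝ) - m : ℝ) : ℂ) * e := by
      push_cast; ring
    rw [hzd] at h
    rw [inn_smul_right] at h
    have hnrm : ‖(((n:ℝ) - m : ℝ) : ℂ) * e‖ = (n:ℝ) - m := by
      rw [norm_mul, he, mul_one, Complex.norm_real, Real.norm_eq_abs, abs_of_pos hd]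
    rw [hnrm] at h
    have hφd : inn (ψ n - ψ m) e = φ n - φ m := by rw [inn_sub_left]
    rw [hφd] at h
    nlinarith [h, hd]
  have mono : Monotone φ := by
    intro m n hmn
    rcases eq_or_lt_of_le hmn with h | h
    · rw [h]
    · have := step m n h
      have : δ * ‖ψ n - ψ m‖ ≥ 0 := by positivity
      linarith [step m n h]
  have hbdd : BddAbove (Set.range φ) := ⟨M₀, by rintro x ⟨n, rfl⟩; exact hb n⟩
  have hφlim : Tendsto φ atTop (𝓝 (⨆ n, φ n)) := tendsto_atTop_ciSup mono hbdd
  set ℓ := ⨆ n, φ n with hℓ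
  have hle : ∀ n, φ n ≤ ℓ := fun n => le_ciSup hbdd n
  have hcauchy : CauchySeq ψ := by
    apply cauchySeq_of_le_tendsto_0 (fun N => (ℓ - φ N) / δ)
    · intro n m N hn hm
      rcases lt_trichotomy n m with h | h | h
      · have h1 := step n m h
        have h2 : φ n ≥ φ N := mono hn
        have h3 : φ m ≤ ℓ := hle m
        rw [dist_eq_norm, show ψ n - ψ m = -(ψ m - ψ n) by ring, norm_neg, le_div_iff₀ hδ]
        linarith
      · subst h
        simp only [dist_self]
        apply div_nonneg _ hδ.le
        linarith [hle N]
      · have h1 := step m n h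
        have h2 : φ m ≥ φ N := mono hm
        have h3 : φ n ≤ ℓ := hle n
        rw [dist_eq_norm, le_div_iff₀ hδ]
        linarith
    · have : Tendsto (fun N => (ℓ - φ N) / δ) atTop (𝓝 ((ℓ - ℓ) / δ)) :=
        ((tendsto_const_nhds.sub hφlim).div_const δ)
      simpa using this
  exact cauchySeq_tendsto_of_complete hcauchy


section Rot
variable (δ : ℝ)

/-- the unit rotation by `arcsin δ`. -/
def rot : ℂ := ((Real.sqrt (1 - δ^2) : ℝ) : ℂ) + (δ:ℝ) * Complex.I

variable {δ}

lemma rot_eq_exp (hδ : 0 < δ) (hδ1 : δ ≤ 1) :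
    rot δ = Complex.exp ((Real.arcsin δ : ℂ) * Complex.I) := by
  rw [Complex.exp_mul_I]
  rw [rot]
  rw [← Complex.ofReal_cos, ← Complex.ofReal_sin]
  rw [Real.cos_arcsin, Real.sin_arcsin (by linarith) hδ1]

lemma rot_norm (hδ : 0 < δ) (hδ1 : δ ≤ 1) : ‖rot δ‖ = 1 := by
  rw [rot_eq_exp hδ hδ1]
  rw [Complex.norm_exp]
  simp

lemma rot_sub_one (hδ : 0 < δ) (hδ1 : δ ≤ 1) : ‖rot δ - 1‖ < 2 * δ := by
  set c := Real.sqrt (1 - δ^2) with hc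
  have hcnn : 0 ≤ c := Real.sqrt_nonneg _
  have hc2 : c^2 = 1 - δ^2 := Real.sq_sqrt (by nlinarith)
  have hnormsq : ‖rot δ - 1‖^2 = 2 - 2*c := by
    have : ‖rot δ - 1‖^2 = (rot δ - 1).re^2 + (rot δ - 1).im^2 := by
      rw [Complex.sq_norm, Complex.normSq_apply]; ring
    rw [this]
    simp [rot, Complex.add_re, Complex.add_im]
    nlinarith [hc2]
  have hcgt : 1 - 2*δ^2 < c := by
    rcases lt_or_ge (1 - 2*δ^2) 0 with h | h
    · linarith
    · have h4 : δ^2 ≤ 1/2 := by nlinarith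
      nlinarith [hc2, hcnn]
  have hsq : ‖rot δ - 1‖^2 < (2*δ)^2 := by
    rw [hnormsq]; nlinarith
  nlinarith [norm_nonneg (rot δ - 1), hδ]

lemma cone_step (hδ : 0 < δ) (hδ1 : δ ≤ 1) {w ek : ℂ} (hek : ‖ek‖ = 1)
    (h : δ * ‖w‖ ≤ inn w ek) : 0 ≤ inn w (ek * rot δ) := by
  set c := Real.sqrt (1 - δ^2) with hc
  have hcnn : 0 ≤ c := Real.sqrt_nonneg _
  have hc2 : c^2 = 1 - δ^2 := Real.sq_sqrt (by nlinarith)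
  have hdecomp : ek * rot δ = (c:ℂ) * ek + (δ:ℂ) * (Complex.I * ek) := by
    rw [rot]; push_cast; ring
  rw [hdecomp, inn_add_right, inn_smul_right, inn_smul_right]
  set A := inn w ek with hA
  set B := inn w (Complex.I * ek) with hB
  have hcross : A^2 + B^2 = ‖w‖^2 := by
    have := cross_sq w ek
    rw [hek] at this; simpa using this
  have hAnn : 0 ≤ A := le_trans (by positivity) h
  -- c^2 A^2 ≥ δ^2 B^2
  have hkey : δ^2 * B^2 ≤ c^2 * A^2 := by
    nlinarith [h, hcross, norm_nonneg w, hAnn,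
      mul_le_mul h h (mul_nonneg hδ.le (norm_nonneg w)) hAnn]
  have habs : δ * |B| ≤ c * A := by
    have h1 : (δ * |B|)^2 ≤ (c * A)^2 := by
      have : (δ*|B|)^2 = δ^2 * B^2 := by rw [mul_pow, _root_.sq_abs]
      rw [this, mul_pow]
      exact hkey
    have h2 : 0 ≤ c * A := by positivity
    nlinarith [abs_nonneg B, hδ]
  have : -(δ * B) ≤ δ * |B| := by
    have := neg_abs_le B
    nlinarith [hδ.le, abs_nonneg B, neg_abs_le B]
  linarith

lemma pinch (hδ : 0 < δ) (hδ1 : δ ≤ 1) {w : ℂ}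
    (h : ∀ k : ℕ, δ * ‖w‖ ≤ inn w ((rot δ)^k)) : w = 0 := by
  by_contra hw
  have hwpos : 0 < ‖w‖ := by simpa [norm_pos_iff] using hw
  set γ := Real.arcsin δ with hγ
  have hγpos : 0 < γ := Real.arcsin_pos.2 hδ
  have hγle : γ ≤ Real.pi/2 := Real.arcsin_le_pi_div_two δ
  set ψ := Complex.arg w with hψ
  have hψlb : -Real.pi < ψ := Complex.neg_pi_lt_arg w
  have hψub : ψ ≤ Real.pi := Complex.arg_le_pi w
  have hπ := Real.pi_pos
  set x := ψ + 2*Real.pi + Real.pi/2 with hx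
  have hxpos : 0 < x := by rw [hx]; linarith
  set k := ⌈x/γ⌉₊ with hk
  have hk1 : x ≤ k * γ := by
    have := Nat.le_ceil (x/γ)
    calc x = (x/γ) * γ := by field_simp
      _ ≤ k * γ := by apply mul_le_mul_of_nonneg_right this hγpos.le
  have hk2 : (k:ℝ) * γ < x + γ := by
    have h0 : (0:ℝ) ≤ x/γ := by positivity
    have := Nat.ceil_lt_add_one h0
    calc (k:ℝ) * γ < (x/γ + 1) * γ := by
          apply mul_lt_mul_of_pos_right this hγpos
      _ = x + γ := by field_simp
  -- compute inn w (rot δ ^ k)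
  have hr : (rot δ)^k = Complex.exp (((k * γ : ℝ) : ℂ) * Complex.I) := by
    rw [rot_eq_exp hδ hδ1, ← Complex.exp_nat_mul]
    congr 1
    push_cast; ring
  have hinn : inn w ((rot δ)^k) = ‖w‖ * Real.cos (ψ - k*γ) := by
    have hwdec : w = (‖w‖ : ℂ) * Complex.exp ((ψ:ℂ) * Complex.I) := by
      rw [hψ]; exact (Complex.norm_mul_exp_arg_mul_I w).symm
    rw [hr, inn]
    rw [← Complex.exp_conj]
    have hconj : (starRingEnd ℂ) (((k * γ : ℝ) : ℂ) * Complex.I) = ((-(k*γ) : ℝ) : ℂ) * Complex.I := by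
      simp [Complex.conj_I]
    rw [hconj]
    conv_lhs => rw [hwdec]
    rw [mul_assoc, ← Complex.exp_add]
    have : (ψ:ℂ) * Complex.I + ((-(k*γ):ℝ):ℂ) * Complex.I = ((ψ - k*γ : ℝ) : ℂ) * Complex.I := by
      push_cast; ring
    rw [this]
    rw [Complex.re_ofReal_mul, Complex.exp_ofReal_mul_I_re]
  -- now conclude
  have hcos : Real.cos (ψ - k*γ) ≤ 0 := by
    have hcos1 : Real.cos (ψ - k*γ) = Real.cos (k*γ - ψ) := by
      rw [← Real.cos_neg]; ring_nf
    have hθ : k*γ - ψ = (k*γ - ψ - 2*Real.pi) + 2*Real.pi := by ring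
    rw [hcos1, hθ, Real.cos_add_two_pi]
    apply Real.cos_nonpos_of_pi_div_two_le_of_le
    · rw [hx] at hk1; linarith
    · rw [hx] at hk2; linarith
  have := h k
  rw [hinn] at this
  nlinarith [hwpos]
end Rot

lemma inn_sub_right (w a b : ℂ) : inn w (a - b) = inn w a - inn w b := by
  simp [inn_def]; ring

variable {f : ℂ → ℂ} {δ : ℝ}

lemma tendsto_nat_shift : Tendsto (fun n : ℕ => n + 1) atTop atTop :=
  tendsto_atTop_mono (fun n => Nat.le_succ n) tendsto_id

lemma tendsto_nat_sq : Tendsto (fun n : ℕ => (n + 1)^2) atTop atTop :=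
  tendsto_atTop_mono (fun n => (Nat.le_succ n).trans (Nat.le_self_pow two_ne_zero _)) tendsto_id

lemma tendsto_c_atTop : Tendsto (fun n : ℕ => ((n:ℝ)+1)^2) atTop atTop := by
  apply tendsto_atTop_mono (fun n : ℕ => show (n:ℝ) ≤ ((n:ℝ)+1)^2 by nlinarith [Nat.cast_nonneg (α := ℝ) n])
  exact tendsto_natCast_atTop_atTop

lemma tendsto_c_inv : Tendsto (fun n : ℕ => (((n:ℝ)+1)^2)⁻¹) atTop (𝓝 0) :=
  tendsto_c_atTop.inv_tendsto_atTop

lemma tendsto_ratio : Tendsto (fun n : ℕ => (((n:ℝ)+1)^2)⁻¹ * ((n:ℝ)+1)) atTop (𝓝 0) := by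
  have h1 : Tendsto (fun n : ℕ => ((n:ℝ)+1)⁻¹) atTop (𝓝 0) := by
    apply Tendsto.inv_tendsto_atTop
    apply tendsto_atTop_mono (fun n : ℕ => show (n:ℝ) ≤ (n:ℝ)+1 by linarith)
    exact tendsto_natCast_atTop_atTop
  apply h1.congr
  intro n
  have : ((n:ℝ)+1) ≠ 0 := by positivity
  field_simp

/-- directions of the difference of two diverging rays -/
lemma ray_dir {z₀ z₁ u v : ℂ} :
    Tendsto (fun n : ℕ => ((((n:ℝ)+1)^2)⁻¹ : ℝ) •
      ((z₀ + (((n+1)^2 : ℕ) : ℂ) * u) - (z₁ + (((n+1) : ℕ) : ℂ) * v))) atTop (𝓝 u) := by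
  have heq : ∀ n : ℕ, ((((n:ℝ)+1)^2)⁻¹ : ℝ) •
      ((z₀ + (((n+1)^2 : ℕ) : ℂ) * u) - (z₁ + (((n+1) : ℕ) : ℂ) * v))
      = ((((n:ℝ)+1)^2)⁻¹ : ℝ) • (z₀ - z₁) + (((((n:ℝ)+1)^2)⁻¹ * (((n:ℝ)+1)^2) : ℝ)) • u
        - (((((n:ℝ)+1)^2)⁻¹ * ((n:ℝ)+1) : ℝ)) • v := by
    intro n
    have h1 : (((n+1)^2 : ℕ) : ℂ) = ((((n:ℝ)+1)^2 : ℝ) : ℂ) := by push_cast; ring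
    have h2 : (((n+1) : ℕ) : ℂ) = ((((n:ℝ)+1) : ℝ) : ℂ) := by norm_cast
    rw [h1, h2]
    simp only [smul_sub, smul_add, Complex.real_smul]
    push_cast
    ring
  rw [show (𝓝 u) = 𝓝 (0 + u - 0) by norm_num]
  apply Tendsto.congr (fun n => (heq n).symm)
  apply Tendsto.sub
  · apply Tendsto.add
    · simpa using tendsto_c_inv.smul_const (z₀ - z₁)
    · have : ∀ n : ℕ, (((((n:ℝ)+1)^2)⁻¹ * (((n:ℝ)+1)^2) : ℝ)) • u = u := by
        intro n
        have : ((n:ℝ)+1)^2 ≠ 0 := by positivity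
        rw [inv_mul_cancel₀ this, one_smul]
      rw [show u = (0:ℂ) + u by ring] at *
      simpa using tendsto_const_nhds.congr (fun n => (this n).symm)
  · simpa using tendsto_ratio.smul_const v

lemma cone_of_ray (hδ : 0 < δ) (hM : Mono f δ) {e : ℂ} (he : ‖e‖ = 1) {z G : ℂ}
    (hG : Tendsto (fun n : ℕ => f (z + (n:ℂ) * e)) atTop (𝓝 G)) :
    δ * ‖G - f z‖ ≤ inn (G - f z) e := by
  have he0 : e ≠ 0 := by intro h; rw [h] at he; simp at he
  apply pair_limit hδ hM (p := fun n : ℕ => z + ((n+1 : ℕ):ℂ) * e) (q := fun _ => z)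
  · exact hG.comp tendsto_nat_shift
  · exact tendsto_const_nhds
  · filter_upwards with n
    intro hcon
    have : ((n+1:ℕ):ℂ) * e = 0 := by linear_combination hcon
    rcases mul_eq_zero.1 this with h | h
    · have hn0 : (n+1 : ℕ) = 0 := by exact_mod_cast h
      omega
    · exact he0 h
  · have : ∀ n : ℕ, ((‖(z + ((n+1 : ℕ):ℂ) * e) - z‖)⁻¹ : ℝ) • ((z + ((n+1 : ℕ):ℂ) * e) - z) = e := by
      intro n
      have h1 : (z + ((n+1 : ℕ):ℂ) * e) - z = ((n+1 : ℕ):ℂ) * e := by ring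
      have hpos : ((n:ℝ)+1) ≠ 0 := by positivity
      have h2 : ‖((n+1 : ℕ):ℂ)‖ = ((n:ℝ)+1) := by
        rw [Complex.norm_natCast]; push_cast; ring
      rw [h1, norm_mul, he, mul_one, h2, Complex.real_smul, Complex.ofReal_inv]
      rw [show ((n+1 : ℕ):ℂ) = ((((n:ℝ)+1) : ℝ) : ℂ) by norm_cast]
      rw [← mul_assoc, inv_mul_cancel₀ (Complex.ofReal_ne_zero.2 hpos), one_mul]
    rw [show (𝓝 e) = 𝓝 e from rfl]
    exact tendsto_const_nhds.congr (fun n => (this n).symm)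

lemma limits_agree (hδ : 0 < δ) (hM : Mono f δ) {u v : ℂ} (hu : ‖u‖ = 1) (hv : ‖v‖ = 1)
    {z₀ z₁ G H : ℂ}
    (hG : Tendsto (fun n : ℕ => f (z₀ + (n:ℂ) * u)) atTop (𝓝 G))
    (hH : Tendsto (fun n : ℕ => f (z₁ + (n:ℂ) * v)) atTop (𝓝 H))
    (hclose : ‖u - v‖ < 2*δ) : G = H := by
  have hGp : Tendsto (fun n : ℕ => f (z₀ + (((n+1)^2 : ℕ):ℂ) * u)) atTop (𝓝 G) :=
    hG.comp tendsto_nat_sq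
  have hGs : Tendsto (fun n : ℕ => f (z₀ + (((n+1) : ℕ):ℂ) * u)) atTop (𝓝 G) :=
    hG.comp tendsto_nat_shift
  have hHp : Tendsto (fun n : ℕ => f (z₁ + (((n+1)^2 : ℕ):ℂ) * v)) atTop (𝓝 H) :=
    hH.comp tendsto_nat_sq
  have hHs : Tendsto (fun n : ℕ => f (z₁ + (((n+1) : ℕ):ℂ) * v)) atTop (𝓝 H) :=
    hH.comp tendsto_nat_shift
  have hcpos : ∀ n : ℕ, (0:ℝ) < ((n:ℝ)+1)^2 := fun n => by positivity
  -- first inequality : inn (G - H) u ≥ δ ‖G - H‖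
  have hd1 := dir_limit (v := fun n : ℕ =>
      (z₀ + (((n+1)^2 : ℕ):ℂ) * u) - (z₁ + (((n+1) : ℕ):ℂ) * v)) hcpos hu ray_dir
  have h1 : δ * ‖G - H‖ ≤ inn (G - H) u := by
    apply pair_limit hδ hM hGp hHs _ hd1.2
    filter_upwards [hd1.1] with n hn
    exact fun hc => hn (by rw [hc]; ring)
  have hd2 := dir_limit (v := fun n : ℕ =>
      (z₁ + (((n+1)^2 : ℕ):ℂ) * v) - (z₀ + (((n+1) : ℕ):ℂ) * u)) hcpos hv ray_dir
  have h2 : δ * ‖H - G‖ ≤ inn (H - G) v := by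
    apply pair_limit hδ hM hHp hGs _ hd2.2
    filter_upwards [hd2.1] with n hn
    exact fun hc => hn (by rw [hc]; ring)
  by_contra hne
  have hDpos : 0 < ‖G - H‖ := by
    simpa [norm_pos_iff, sub_ne_zero] using hne
  have h2' : inn (G - H) v ≤ -(δ * ‖G - H‖) := by
    have : inn (H - G) v = - inn (G - H) v := by
      rw [show H - G = -(G - H) by ring]; simp [inn_def]; ring
    rw [this] at h2
    rw [show ‖H - G‖ = ‖G - H‖ by rw [← norm_neg]; ring_nf] at h2
    linarith
  have hcomb : 2 * δ * ‖G - H‖ ≤ inn (G - H) (u - v) := by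
    rw [inn_sub_right]; linarith
  have hub : inn (G - H) (u - v) ≤ ‖G - H‖ * ‖u - v‖ := inn_le _ _
  nlinarith


lemma key_const (hδ : 0 < δ) (hδ1 : δ ≤ 1) (hM : Mono f δ) {M₀ : ℝ}
    (hbdd : ∀ x : ℝ, (f ((x:ℂ))).re ≤ M₀) : ∀ z : ℂ, f z = f 0 := by
  have inn_one : ∀ w : ℂ, inn w 1 = w.re := by intro w; simp [inn_def]
  have hcast : ∀ n : ℕ, (0:ℂ) + (n:ℂ) * 1 = (((n:ℝ)):ℂ) := by intro n; push_cast; ring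
  have hreb : ∀ n : ℕ, inn (f ((0:ℂ) + (n:ℂ) * 1)) 1 ≤ M₀ := by
    intro n; rw [inn_one, hcast]; exact hbdd _
  obtain ⟨F, hF⟩ := ray_limit hδ hM (e := 1) (z₀ := 0) norm_one hreb
  -- global bound on the real part
  have GLOB : ∀ z : ℂ, (f z).re ≤ M₀ := by
    intro z
    by_contra hcon
    push_neg at hcon
    set c := (f z).re - M₀ with hc
    have hcpos : 0 < c := by linarith
    obtain ⟨N, hN⟩ := (Metric.tendsto_atTop.1 hF) 1 one_pos
    set C₂ := 1 + ‖F‖ + ‖f z‖ with hC₂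
    have hC₂pos : 0 < C₂ := by positivity
    obtain ⟨n₁, hn₁⟩ := exists_nat_ge (max z.re (z.re + (C₂ * |z.im| + 1)/c))
    set n := max n₁ N with hn
    have hnN : N ≤ n := le_max_right _ _
    have hnn₁ : (n₁:ℝ) ≤ n := by exact_mod_cast le_max_left n₁ N
    have hnge : max z.re (z.re + (C₂ * |z.im| + 1)/c) ≤ (n:ℝ) := le_trans hn₁ hnn₁
    have hge1 : z.re ≤ (n:ℝ) := le_trans (le_max_left _ _) hnge
    have hge2 : z.re + (C₂ * |z.im| + 1)/c ≤ (n:ℝ) := le_trans (le_max_right _ _) hnge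
    have hzne : (0:ℂ) + (n:ℂ) * 1 ≠ z := by
      intro h
      have : (f z).re ≤ M₀ := by
        rw [← h, hcast]; exact hbdd _
      linarith
    have h := hM _ _ hzne
    set W := f ((0:ℂ) + (n:ℂ) * 1) - f z with hW
    have hWre : W.re ≤ -c := by
      have := hreb n
      rw [inn_one] at this
      simp only [hW, Complex.sub_re]
      linarith
    have hWim : |W.im| ≤ C₂ := by
      have h1 : ‖W‖ ≤ ‖f ((0:ℂ) + (n:ℂ) * 1) - F‖ + ‖F‖ + ‖f z‖ := by
        have : W = (f ((0:ℂ) + (n:ℂ) * 1) - F) + F - f z := by ring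
        rw [this]
        calc ‖f ((0:ℂ) + (n:ℂ) * 1) - F + F - f z‖
            ≤ ‖f ((0:ℂ) + (n:ℂ) * 1) - F + F‖ + ‖f z‖ := norm_sub_le _ _
          _ ≤ ‖f ((0:ℂ) + (n:ℂ) * 1) - F‖ + ‖F‖ + ‖f z‖ := by
              have := norm_add_le (f ((0:ℂ) + (n:ℂ) * 1) - F) F
              linarith
      have h2 : ‖f ((0:ℂ) + (n:ℂ) * 1) - F‖ ≤ 1 := by
        have := hN n hnN
        rw [dist_eq_norm] at this
        linarith
      have h3 : |W.im| ≤ ‖W‖ := by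
        exact Complex.abs_im_le_norm W
      linarith
    have hV : ((0:ℂ) + (n:ℂ) * 1 - z) = (((n:ℝ) - z.re : ℝ):ℂ) + (-z.im : ℝ) * Complex.I := by
      apply Complex.ext <;> simp
    have hinnV : inn W ((0:ℂ) + (n:ℂ) * 1 - z) = W.re * ((n:ℝ) - z.re) + W.im * (-z.im) := by
      rw [inn_def]
      congr 1 <;> rw [hV] <;> simp
    have hlhs : 0 ≤ inn W ((0:ℂ) + (n:ℂ) * 1 - z) := by
      refine le_trans ?_ h
      positivity
    rw [hinnV] at hlhs
    have him : W.im * (-z.im) ≤ C₂ * |z.im| := by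
      calc W.im * (-z.im) ≤ |W.im * (-z.im)| := le_abs_self _
        _ = |W.im| * |z.im| := by rw [abs_mul, abs_neg]
        _ ≤ C₂ * |z.im| := by
            apply mul_le_mul_of_nonneg_right hWim (abs_nonneg _)
    have hre : W.re * ((n:ℝ) - z.re) ≤ -c * ((n:ℝ) - z.re) := by
      apply mul_le_mul_of_nonneg_right hWre (by linarith)
    have : (C₂ * |z.im| + 1)/c ≤ (n:ℝ) - z.re := by linarith
    have h4 : C₂ * |z.im| + 1 ≤ c * ((n:ℝ) - z.re) := by
      rw [div_le_iff₀ hcpos] at this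
      linarith
    nlinarith
  -- limits along all the rotated directions
  have hrnorm : ∀ k : ℕ, ‖(rot δ)^k‖ = 1 := by
    intro k; rw [norm_pow, rot_norm hδ hδ1, one_pow]
  have S : ∀ k : ℕ, ∀ z₀ : ℂ,
      Tendsto (fun n : ℕ => f (z₀ + (n:ℂ) * (rot δ)^k)) atTop (𝓝 F) := by
    intro k
    induction k with
    | zero =>
      intro z₀
      simp only [pow_zero]
      have hb : ∀ n : ℕ, inn (f (z₀ + (n:ℂ) * 1)) 1 ≤ M₀ := by
        intro n; rw [inn_one]; exact GLOB _
      obtain ⟨G, hG⟩ := ray_limit hδ hM (e := 1) (z₀ := z₀) norm_one hb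
      have : G = F := by
        apply limits_agree hδ hM norm_one norm_one hG hF
        simp only [sub_self, norm_zero]
        positivity
      rwa [this] at hG
    | succ k ih =>
      intro z₀
      have hek : ‖(rot δ)^k‖ = 1 := hrnorm k
      have hek1 : ‖(rot δ)^(k+1)‖ = 1 := hrnorm (k+1)
      have cone_k : ∀ z : ℂ, δ * ‖F - f z‖ ≤ inn (F - f z) ((rot δ)^k) := by
        intro z; exact cone_of_ray hδ hM hek (ih z)
      have hb : ∀ n : ℕ, inn (f (z₀ + (n:ℂ) * (rot δ)^(k+1))) ((rot δ)^(k+1)) ≤ inn F ((rot δ)^(k+1)) := by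
        intro n
        set p := z₀ + (n:ℂ) * (rot δ)^(k+1)
        have h0 := cone_step hδ hδ1 hek (cone_k p)
        rw [← pow_succ] at h0
        rw [inn_sub_left] at h0
        linarith
      obtain ⟨G, hG⟩ := ray_limit hδ hM (e := (rot δ)^(k+1)) (z₀ := z₀) hek1 hb
      have : G = F := by
        apply limits_agree hδ hM hek1 hek hG (ih 0)
        have : (rot δ)^(k+1) - (rot δ)^k = (rot δ)^k * (rot δ - 1) := by ring
        rw [this, norm_mul, hek, one_mul]
        exact rot_sub_one hδ hδ1
      rwa [this] at hG
  -- conclude via pinching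
  have hall : ∀ z : ℂ, f z = F := by
    intro z
    have hcone : ∀ k : ℕ, δ * ‖F - f z‖ ≤ inn (F - f z) ((rot δ)^k) := by
      intro k; exact cone_of_ray hδ hM (hrnorm k) (S k z)
    have := pinch hδ hδ1 hcone
    have : F - f z = 0 := this
    linear_combination -this
  intro z
  rw [hall z, hall 0]


lemma inn_smul_left (w v : ℂ) (t : ℝ) : inn ((t:ℂ) * w) v = t * inn w v := by
  simp [inn_def]; ring

lemma inn_self_neg (w : ℂ) : inn w (-w) = -‖w‖^2 := by
  have : ‖w‖^2 = w.re^2 + w.im^2 := by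
    rw [Complex.sq_norm, Complex.normSq_apply]; ring
  rw [this]; simp [inn_def]; ring

/-- local boundedness of monotone maps -/
lemma loc_bdd (hδ : 0 < δ) (hM : Mono f δ) (s : ℂ) :
    ∃ C : ℝ, ∀ z : ℂ, ‖z - s‖ ≤ 1 → ‖f z‖ ≤ C := by
  by_contra hcon
  push_neg at hcon
  have hz : ∀ n : ℕ, ∃ z : ℂ, ‖z - s‖ ≤ 1 ∧ (n:ℝ) < ‖f z‖ := fun n => hcon n
  choose z hz1 hz2 using hz
  have hzball : ∀ n, z n ∈ Metric.closedBall s 1 := by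
    intro n; rw [Metric.mem_closedBall, dist_eq_norm]; exact hz1 n
  obtain ⟨zstar, hzstar, φ, hφmono, hφlim⟩ :=
    (isCompact_closedBall s 1).tendsto_subseq hzball
  -- pass to normalized values
  set ξ0 : ℕ → ℂ := fun n => z (φ (n+1)) with hξ0
  have hξ0lim : Tendsto ξ0 atTop (𝓝 zstar) := hφlim.comp tendsto_nat_shift
  have hρ : ∀ n : ℕ, (n:ℝ) + 1 ≤ ‖f (ξ0 n)‖ := by
    intro n
    have h1 : ((φ (n+1) : ℝ)) < ‖f (z (φ (n+1)))‖ := hz2 _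
    have h2 : (n+1 : ℕ) ≤ φ (n+1) := hφmono.le_apply
    have : ((n+1 : ℕ):ℝ) ≤ (φ (n+1) : ℝ) := by exact_mod_cast h2
    push_cast at this
    calc (n:ℝ) + 1 ≤ (φ (n+1) : ℝ) := this
      _ ≤ ‖f (ξ0 n)‖ := h1.le
  have hρpos : ∀ n, (0:ℝ) < ‖f (ξ0 n)‖ := fun n => lt_of_lt_of_le (by positivity) (hρ n)
  set w : ℕ → ℂ := fun n => ((‖f (ξ0 n)‖⁻¹ : ℝ) : ℂ) * f (ξ0 n) with hw
  have hwsphere : ∀ n, w n ∈ Metric.sphere (0:ℂ) 1 := by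
    intro n
    rw [Metric.mem_sphere, dist_zero_right, norm_mul, Complex.norm_real,
      Real.norm_eq_abs, abs_of_pos (inv_pos.2 (hρpos n)), inv_mul_cancel₀ (hρpos n).ne']
  obtain ⟨ω, hωsphere, σ, hσmono, hσlim⟩ :=
    (isCompact_sphere (0:ℂ) 1).tendsto_subseq hwsphere
  have hωnorm : ‖ω‖ = 1 := by
    rw [Metric.mem_sphere, dist_zero_right] at hωsphere; exact hωsphere
  set ξ : ℕ → ℂ := fun n => ξ0 (σ n) with hξ
  have hξlim : Tendsto ξ atTop (𝓝 zstar) := hξ0lim.comp hσmono.tendsto_atTop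
  set ζ : ℂ := zstar + ω with hζ
  have hζne : ζ ≠ zstar := by
    intro h
    have : ω = 0 := by rw [hζ] at h; linear_combination h
    rw [this] at hωnorm; simp at hωnorm
  have hev : ∀ᶠ n in atTop, ξ n ≠ ζ := by
    exact hξlim.eventually (eventually_ne_nhds hζne.symm)
  -- the key inequality
  have hineq : ∀ᶠ n in atTop,
      (‖f (ξ n)‖⁻¹ : ℝ) * inn (f ζ) (ξ n - ζ) ≤ inn (w (σ n)) (ξ n - ζ) := by
    filter_upwards [hev] with n hn
    have h := hM (ξ n) ζ hn
    have h0 : 0 ≤ inn (f (ξ n) - f ζ) (ξ n - ζ) := le_trans (by positivity) h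
    rw [inn_sub_left] at h0
    have hpos : (0:ℝ) ≤ ‖f (ξ n)‖⁻¹ := (inv_pos.2 (hρpos (σ n))).le
    have : inn (w (σ n)) (ξ n - ζ) = (‖f (ξ0 (σ n))‖⁻¹ : ℝ) * inn (f (ξ n)) (ξ n - ζ) := by
      rw [hw, inn_smul_left]
    rw [this]
    apply mul_le_mul_of_nonneg_left _ (inv_pos.2 (hρpos (σ n))).le
    linarith
  -- limits
  have hLHS : Tendsto (fun n => (‖f (ξ n)‖⁻¹ : ℝ) * inn (f ζ) (ξ n - ζ)) atTop (𝓝 0) := by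
    refine squeeze_zero_norm (f := fun n : ℕ => (‖f (ξ n)‖⁻¹ : ℝ) * inn (f ζ) (ξ n - ζ))
      (a := fun n => ‖f ζ‖ * 3 * (((n:ℝ)+1)⁻¹)) ?_ ?_
    · intro n
      rw [Real.norm_eq_abs, abs_mul, _root_.abs_of_nonneg (inv_nonneg.2 (norm_nonneg (f (ξ n))))]
      have h1 : |inn (f ζ) (ξ n - ζ)| ≤ ‖f ζ‖ * ‖ξ n - ζ‖ := by
        rw [abs_le]
        constructor
        · have := inn_le (f ζ) (-(ξ n - ζ))
          rw [inn_neg_right, norm_neg] at this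
          linarith
        · exact inn_le _ _
      have h2 : ‖ξ n - ζ‖ ≤ 3 := by
        have ha : ‖ξ n - s‖ ≤ 1 := hz1 _
        have hb : ‖s - zstar‖ ≤ 1 := by
          have := hzstar
          rw [Metric.mem_closedBall, dist_eq_norm] at this
          rw [← norm_neg]; simpa [neg_sub] using this
        calc ‖ξ n - ζ‖ = ‖(ξ n - s) + (s - zstar) + (-ω)‖ := by rw [hζ]; ring_nf
          _ ≤ ‖(ξ n - s) + (s - zstar)‖ + ‖-ω‖ := norm_add_le _ _
          _ ≤ ‖ξ n - s‖ + ‖s - zstar‖ + ‖ω‖ := by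
              have := norm_add_le (ξ n - s) (s - zstar)
              rw [norm_neg]; linarith
          _ ≤ 3 := by rw [hωnorm]; linarith
      have h3 : ‖f (ξ n)‖⁻¹ ≤ ((n:ℝ)+1)⁻¹ := by
        apply inv_anti₀ (by positivity) (hρ (σ n) |>.trans' ?_)
        have : (n:ℝ) ≤ (σ n : ℝ) := by exact_mod_cast hσmono.le_apply
        linarith
      calc ‖f (ξ n)‖⁻¹ * |inn (f ζ) (ξ n - ζ)| ≤ ((n:ℝ)+1)⁻¹ * (‖f ζ‖ * 3) := by
            apply mul_le_mul h3 (by linarith [h1, mul_le_mul_of_nonneg_left h2 (norm_nonneg (f ζ))]) (abs_nonneg _) (by positivity)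
        _ = ‖f ζ‖ * 3 * ((n:ℝ)+1)⁻¹ := by ring
    · rw [show (0:ℝ) = ‖f ζ‖ * 3 * 0 by ring]
      apply Tendsto.const_mul
      apply Tendsto.inv_tendsto_atTop
      apply tendsto_atTop_mono (fun n : ℕ => show (n:ℝ) ≤ (n:ℝ)+1 by linarith)
      exact tendsto_natCast_atTop_atTop
  have hRHS : Tendsto (fun n => inn (w (σ n)) (ξ n - ζ)) atTop (𝓝 (inn ω (zstar - ζ))) := by
    exact (inn_continuous.tendsto (ω, zstar - ζ)).comp (hσlim.prodMk_nhds (hξlim.sub tendsto_const_nhds))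
  have hfinal : (0:ℝ) ≤ inn ω (zstar - ζ) := le_of_tendsto_of_tendsto hLHS hRHS hineq
  have : zstar - ζ = -ω := by rw [hζ]; ring
  rw [this, inn_self_neg, hωnorm] at hfinal
  norm_num at hfinal


lemma pinch_two (hδ : 0 < δ) {D u v : ℂ} (hclose : ‖u - v‖ < 2*δ)
    (h1 : δ * ‖D‖ ≤ inn D u) (h2 : δ * ‖D‖ ≤ inn D (-v)) : D = 0 := by
  by_contra hD
  have hpos : 0 < ‖D‖ := by simpa [norm_pos_iff] using hD
  have hsum : 2*δ*‖D‖ ≤ inn D (u - v) := by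
    rw [inn_sub_right]
    rw [inn_neg_right] at h2
    linarith
  have hub := inn_le D (u - v)
  nlinarith

lemma seg_step (hδ : 0 < δ) (hM : Mono f δ) {e s : ℂ} (he : ‖e‖ = 1)
    {a b : ℝ} (hab : a < b) :
    δ * ‖f (s + (b:ℂ) * e) - f (s + (a:ℂ) * e)‖
      ≤ inn (f (s + (b:ℂ) * e) - f (s + (a:ℂ) * e)) e := by
  have he0 : e ≠ 0 := by intro h; rw [h] at he; simp at he
  have hd : 0 < b - a := by linarith
  have hzne : s + (b:ℂ) * e ≠ s + (a:ℂ) * e := by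
    intro hcon
    have : ((b - a : ℝ):ℂ) * e = 0 := by push_cast; linear_combination hcon
    rcases mul_eq_zero.1 this with h | h
    · have : (b - a : ℝ) = 0 := by exact_mod_cast h
      linarith
    · exact he0 h
  have h := hM _ _ hzne
  have hzd : (s + (b:ℂ) * e) - (s + (a:ℂ) * e) = ((b - a : ℝ):ℂ) * e := by push_cast; ring
  rw [hzd, inn_smul_right] at h
  have hnrm : ‖((b - a : ℝ):ℂ) * e‖ = b - a := by
    rw [norm_mul, he, mul_one, Complex.norm_real, Real.norm_eq_abs, abs_of_pos hd]
  rw [hnrm] at h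
  nlinarith

lemma seg_limit (hδ : 0 < δ) (hM : Mono f δ) {e s : ℂ} (he : ‖e‖ = 1) {C : ℝ}
    (hC : ∀ z : ℂ, ‖z - s‖ ≤ 1 → ‖f z‖ ≤ C) :
    ∃ V, Tendsto (fun n : ℕ => f (s + ((((n:ℝ)+1)⁻¹ : ℝ) : ℂ) * e)) atTop (𝓝 V) := by
  set t : ℕ → ℝ := fun n => ((n:ℝ)+1)⁻¹ with ht
  have htpos : ∀ n, 0 < t n := fun n => by positivity
  have htle : ∀ n, t n ≤ 1 := by
    intro n
    rw [ht]
    apply inv_le_one_of_one_le₀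
    have : (0:ℝ) ≤ (n:ℝ) := Nat.cast_nonneg n
    linarith
  have htanti : ∀ m n : ℕ, m < n → t n < t m := by
    intro m n h
    apply inv_strictAnti₀ (by positivity)
    have : (m:ℝ) < n := by exact_mod_cast h
    linarith
  set ψ : ℕ → ℂ := fun n => f (s + ((t n : ℝ):ℂ) * e) with hψ
  set φ : ℕ → ℝ := fun n => inn (ψ n) e with hφ
  have hnorm : ∀ n, ‖ψ n‖ ≤ C := by
    intro n
    apply hC
    have : (s + ((t n : ℝ):ℂ) * e) - s = ((t n : ℝ):ℂ) * e := by ring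
    rw [this, norm_mul, he, mul_one, Complex.norm_real, Real.norm_eq_abs,
      abs_of_pos (htpos n)]
    exact htle n
  have step : ∀ m n : ℕ, m < n → δ * ‖ψ m - ψ n‖ ≤ φ m - φ n := by
    intro m n hmn
    have := seg_step hδ hM (s := s) he (htanti m n hmn)
    rw [inn_sub_left] at this
    exact this
  have hanti : Antitone φ := by
    intro m n hmn
    rcases eq_or_lt_of_le hmn with h | h
    · rw [h]
    · have h1 := step m n h
      have h2 : 0 ≤ δ * ‖ψ m - ψ n‖ := by positivity
      linarith
  have hbdd : BddBelow (Set.range φ) := by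
    refine ⟨-C, ?_⟩
    rintro x ⟨n, rfl⟩
    have h1 : inn (ψ n) (-e) ≤ ‖ψ n‖ * ‖-e‖ := inn_le _ _
    rw [inn_neg_right, norm_neg, he, mul_one] at h1
    have := hnorm n
    simp only [hφ]
    linarith
  have hφlim : Tendsto φ atTop (𝓝 (⨅ n, φ n)) := tendsto_atTop_ciInf hanti hbdd
  set ℓ := ⨅ n, φ n with hℓ
  have hle : ∀ n, ℓ ≤ φ n := fun n => ciInf_le hbdd n
  have hcauchy : CauchySeq ψ := by
    apply cauchySeq_of_le_tendsto_0 (fun N => (φ N - ℓ) / δ)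
    · intro n m N hn hm
      rcases lt_trichotomy n m with h | h | h
      · have h1 := step n m h
        have h2 : φ n ≤ φ N := hanti hn
        have h3 : ℓ ≤ φ m := hle m
        rw [dist_eq_norm, le_div_iff₀ hδ]
        linarith
      · subst h
        simp only [dist_self]
        apply div_nonneg _ hδ.le
        linarith [hle N]
      · have h1 := step m n h
        have h2 : φ m ≤ φ N := hanti hm
        have h3 : ℓ ≤ φ n := hle n
        rw [dist_eq_norm, show ψ n - ψ m = -(ψ m - ψ n) by ring, norm_neg, le_div_iff₀ hδ]
        linarith
    · have : Tendsto (fun N => (φ N - ℓ) / δ) atTop (𝓝 ((ℓ - ℓ) / δ)) := by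
        apply Tendsto.div_const
        simpa using hφlim.sub (tendsto_const_nhds (x := ℓ))
      simpa using this
  exact cauchySeq_tendsto_of_complete hcauchy

lemma seg_cone (hδ : 0 < δ) (hM : Mono f δ) {e s V : ℂ} (he : ‖e‖ = 1)
    (hV : Tendsto (fun n : ℕ => f (s + ((((n:ℝ)+1)⁻¹ : ℝ) : ℂ) * e)) atTop (𝓝 V)) :
    δ * ‖V - f s‖ ≤ inn (V - f s) e := by
  have he0 : e ≠ 0 := by intro h; rw [h] at he; simp at he
  apply pair_limit hδ hM (p := fun n : ℕ => s + ((((n:ℝ)+1)⁻¹ : ℝ) : ℂ) * e) (q := fun _ => s)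
    hV tendsto_const_nhds
  · filter_upwards with n
    intro hcon
    have h0 : ((((n:ℝ)+1)⁻¹ : ℝ) : ℂ) * e = 0 := by linear_combination hcon
    rcases mul_eq_zero.1 h0 with h | h
    · have : (((n:ℝ)+1)⁻¹ : ℝ) = 0 := by exact_mod_cast h
      have : (0:ℝ) < ((n:ℝ)+1)⁻¹ := by positivity
      linarith
    · exact he0 h
  · have heq : ∀ n : ℕ, ((‖(s + ((((n:ℝ)+1)⁻¹ : ℝ) : ℂ) * e) - s‖)⁻¹ : ℝ) •
        ((s + ((((n:ℝ)+1)⁻¹ : ℝ) : ℂ) * e) - s) = e := by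
      intro n
      have hpos : (0:ℝ) < ((n:ℝ)+1)⁻¹ := by positivity
      have h1 : (s + ((((n:ℝ)+1)⁻¹ : ℝ) : ℂ) * e) - s = ((((n:ℝ)+1)⁻¹ : ℝ) : ℂ) * e := by ring
      rw [h1, norm_mul, he, mul_one, Complex.norm_real, Real.norm_eq_abs, abs_of_pos hpos,
        inv_inv, Complex.real_smul, ← mul_assoc, ← Complex.ofReal_mul,
        mul_inv_cancel₀ (by positivity : ((n:ℝ)+1) ≠ 0), Complex.ofReal_one, one_mul]
    exact tendsto_const_nhds.congr (fun n => (heq n).symm)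


lemma nat_sq_cast (n : ℕ) : ((((n+1)^2 - 1 : ℕ):ℝ) + 1)⁻¹ = (((n:ℝ)+1)^2)⁻¹ := by
  have h1 : (1:ℕ) ≤ (n+1)^2 := Nat.one_le_iff_ne_zero.2 (by positivity)
  congr 1
  rw [Nat.cast_sub h1]
  push_cast
  ring

lemma tendsto_gsub : Tendsto (fun n : ℕ => (n+1)^2 - 1) atTop atTop := by
  apply tendsto_atTop_mono (fun n : ℕ => ?_) tendsto_id
  show id n ≤ (n+1)^2 - 1
  simp only [id]
  calc n = (n+1) - 1 := by omega
    _ ≤ (n+1)^2 - 1 := Nat.sub_le_sub_right (Nat.le_self_pow two_ne_zero _) 1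

lemma seg_dir_aux {s u v : ℂ} :
    Tendsto (fun n : ℕ => (((((n:ℝ)+1)⁻¹ : ℝ))⁻¹ : ℝ) •
      ((s + (((((n:ℝ)+1)^2)⁻¹ : ℝ) : ℂ) * u) - (s + ((((n:ℝ)+1)⁻¹ : ℝ) : ℂ) * v)))
      atTop (𝓝 (-v)) := by
  have heq : ∀ n : ℕ, (((((n:ℝ)+1)⁻¹ : ℝ))⁻¹ : ℝ) •
      ((s + (((((n:ℝ)+1)^2)⁻¹ : ℝ) : ℂ) * u) - (s + ((((n:ℝ)+1)⁻¹ : ℝ) : ℂ) * v))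
      = ((((n:ℝ)+1)⁻¹ : ℝ)) • u - v := by
    intro n
    have hne : ((n:ℂ)+1) ≠ 0 := by
      intro h
      have h2 : ((n:ℝ)+1) = 0 := by exact_mod_cast h
      nlinarith [Nat.cast_nonneg (α := ℝ) n]
    rw [inv_inv, Complex.real_smul, Complex.real_smul]
    push_cast
    field_simp
    ring
  have h0 : Tendsto (fun n : ℕ => (((n:ℝ)+1)⁻¹ : ℝ)) atTop (𝓝 0) := by
    apply Tendsto.inv_tendsto_atTop
    apply tendsto_atTop_mono (fun n : ℕ => show (n:ℝ) ≤ (n:ℝ)+1 by linarith)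
    exact tendsto_natCast_atTop_atTop
  have : Tendsto (fun n : ℕ => ((((n:ℝ)+1)⁻¹ : ℝ)) • u - v) atTop (𝓝 ((0:ℝ) • u - v)) :=
    (h0.smul_const u).sub_const v
  rw [zero_smul, zero_sub] at this
  exact this.congr (fun n => (heq n).symm)

lemma seg_agree (hδ : 0 < δ) (hM : Mono f δ) {s u v Vu Vv : ℂ} (hu : ‖u‖ = 1) (hv : ‖v‖ = 1)
    (hVu : Tendsto (fun n : ℕ => f (s + ((((n:ℝ)+1)⁻¹ : ℝ) : ℂ) * u)) atTop (𝓝 Vu))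
    (hVv : Tendsto (fun n : ℕ => f (s + ((((n:ℝ)+1)⁻¹ : ℝ) : ℂ) * v)) atTop (𝓝 Vv))
    (hclose : ‖u - v‖ < 2*δ) : Vu = Vv := by
  have hcpos : ∀ n : ℕ, (0:ℝ) < (((n:ℝ)+1)⁻¹ : ℝ) := fun n => by positivity
  have hVu2 : Tendsto (fun n : ℕ => f (s + (((((n:ℝ)+1)^2)⁻¹ : ℝ) : ℂ) * u)) atTop (𝓝 Vu) := by
    apply (hVu.comp tendsto_gsub).congr
    intro n
    simp only [Function.comp]
    rw [nat_sq_cast n]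
  have hVv2 : Tendsto (fun n : ℕ => f (s + (((((n:ℝ)+1)^2)⁻¹ : ℝ) : ℂ) * v)) atTop (𝓝 Vv) := by
    apply (hVv.comp tendsto_gsub).congr
    intro n
    simp only [Function.comp]
    rw [nat_sq_cast n]
  have hnegv : ‖-v‖ = 1 := by rw [norm_neg]; exact hv
  have hnegu : ‖-u‖ = 1 := by rw [norm_neg]; exact hu
  have hd1 := dir_limit (v := fun n : ℕ =>
      (s + (((((n:ℝ)+1)^2)⁻¹ : ℝ) : ℂ) * u) - (s + ((((n:ℝ)+1)⁻¹ : ℝ) : ℂ) * v))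
      (c := fun n => (((n:ℝ)+1)⁻¹ : ℝ)) hcpos hnegv seg_dir_aux
  have h1 : δ * ‖Vu - Vv‖ ≤ inn (Vu - Vv) (-v) := by
    apply pair_limit hδ hM hVu2 hVv _ hd1.2
    filter_upwards [hd1.1] with n hn
    exact fun hc => hn (by rw [hc]; ring)
  have hd2 := dir_limit (v := fun n : ℕ =>
      (s + (((((n:ℝ)+1)^2)⁻¹ : ℝ) : ℂ) * v) - (s + ((((n:ℝ)+1)⁻¹ : ℝ) : ℂ) * u))
      (c := fun n => (((n:ℝ)+1)⁻¹ : ℝ)) hcpos hnegu seg_dir_aux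
  have h2 : δ * ‖Vv - Vu‖ ≤ inn (Vv - Vu) (-u) := by
    apply pair_limit hδ hM hVv2 hVu _ hd2.2
    filter_upwards [hd2.1] with n hn
    exact fun hc => hn (by rw [hc]; ring)
  have h2' : δ * ‖Vu - Vv‖ ≤ inn (Vu - Vv) u := by
    have e1 : Vv - Vu = -(Vu - Vv) := by ring
    rw [e1, show ‖-(Vu - Vv)‖ = ‖Vu - Vv‖ from norm_neg _, inn_neg_neg] at h2
    exact h2
  exact sub_eq_zero.1 (pinch_two hδ hclose h2' h1)


lemma cont_at (hδ : 0 < δ) (hδ1 : δ ≤ 1) (hM : Mono f δ) (s : ℂ) : ContinuousAt f s := by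
  obtain ⟨C, hC⟩ := loc_bdd hδ hM s
  have hrnorm : ∀ k : ℕ, ‖(rot δ)^k‖ = 1 := fun k => by
    rw [norm_pow, rot_norm hδ hδ1, one_pow]
  have hV : ∀ k : ℕ, ∃ V,
      Tendsto (fun n : ℕ => f (s + ((((n:ℝ)+1)⁻¹ : ℝ) : ℂ) * (rot δ)^k)) atTop (𝓝 V) :=
    fun k => seg_limit hδ hM (hrnorm k) hC
  choose V hVk using hV
  have hchain : ∀ k, V (k+1) = V k := by
    intro k
    apply seg_agree hδ hM (hrnorm (k+1)) (hrnorm k) (hVk (k+1)) (hVk k)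
    have h1 : (rot δ)^(k+1) - (rot δ)^k = (rot δ)^k * (rot δ - 1) := by ring
    rw [h1, norm_mul, hrnorm k, one_mul]
    exact rot_sub_one hδ hδ1
  have hVconst : ∀ k, V k = V 0 := by
    intro k; induction k with
    | zero => rfl
    | succ k ih => rw [hchain k, ih]
  have hV0 : V 0 = f s := by
    have hcone : ∀ k : ℕ, δ * ‖V 0 - f s‖ ≤ inn (V 0 - f s) ((rot δ)^k) := by
      intro k
      have := seg_cone hδ hM (hrnorm k) (hVk k)
      rwa [hVconst k] at this
    exact sub_eq_zero.1 (pinch hδ hδ1 hcone)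
  have hVs : ∀ k, Tendsto (fun n : ℕ => f (s + ((((n:ℝ)+1)⁻¹ : ℝ) : ℂ) * (rot δ)^k))
      atTop (𝓝 (f s)) := by
    intro k; have := hVk k; rwa [hVconst k, hV0] at this
  rw [ContinuousAt]
  apply tendsto_iff_seq_tendsto.2
  intro x hx
  by_contra hcon
  rw [Metric.tendsto_atTop] at hcon
  push_neg at hcon
  obtain ⟨ε, hε, hfreq⟩ := hcon
  have hfreq' : ∃ᶠ n in atTop, ε ≤ dist (f (x n)) (f s) := by
    rw [frequently_atTop]
    intro N; obtain ⟨n, hn1, hn2⟩ := hfreq N; exact ⟨n, hn1, hn2⟩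
  obtain ⟨φ, hφmono, hφ⟩ := Filter.extraction_of_frequently_atTop hfreq'
  set y : ℕ → ℂ := fun n => x (φ n) with hy
  have hylim : Tendsto y atTop (𝓝 s) := hx.comp hφmono.tendsto_atTop
  obtain ⟨N₀, hN₀⟩ := (Metric.tendsto_atTop.1 hylim) 1 one_pos
  set y' : ℕ → ℂ := fun n => y (n + N₀) with hy'
  have hy'lim : Tendsto y' atTop (𝓝 s) := hylim.comp (tendsto_add_atTop_nat N₀)
  have hy'ball : ∀ n, f (y' n) ∈ Metric.closedBall (0:ℂ) C := by
    intro n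
    rw [Metric.mem_closedBall, dist_zero_right]
    apply hC
    have := hN₀ (n + N₀) (Nat.le_add_left _ _)
    rw [dist_eq_norm] at this
    exact this.le
  obtain ⟨W, hWball, σ, hσmono, hσlim⟩ :=
    (isCompact_closedBall (0:ℂ) C).tendsto_subseq hy'ball
  set ξ : ℕ → ℂ := fun n => y' (σ n) with hξ
  have hξlim : Tendsto ξ atTop (𝓝 s) := hy'lim.comp hσmono.tendsto_atTop
  have hfW : Tendsto (fun n => f (ξ n)) atTop (𝓝 W) := hσlim
  have hWdist : ε ≤ dist W (f s) := by
    apply ge_of_tendsto (hfW.dist (tendsto_const_nhds (x := f s)))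
    filter_upwards with n
    exact hφ (σ n + N₀)
  have hkey : ∀ k : ℕ, δ * ‖f s - W‖ ≤ inn (f s - W) ((rot δ)^k) := by
    intro k
    have hm : ∀ m : ℕ, δ * ‖f (s + ((((m:ℝ)+1)⁻¹ : ℝ):ℂ) * (rot δ)^k) - W‖
        ≤ inn (f (s + ((((m:ℝ)+1)⁻¹ : ℝ):ℂ) * (rot δ)^k) - W) ((rot δ)^k) := by
      intro m
      set tm : ℝ := (((m:ℝ)+1)⁻¹ : ℝ) with htm
      have htmpos : 0 < tm := by rw [htm]; positivity
      set pm := s + ((tm : ℝ):ℂ) * (rot δ)^k with hpm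
      have hpm_s : pm - s = ((tm : ℝ):ℂ) * (rot δ)^k := by rw [hpm]; ring
      have hrk0 : (rot δ)^k ≠ 0 := by
        intro h
        have := hrnorm k
        rw [h] at this; simp at this
      have hpms : s ≠ pm := by
        intro h
        have h0 : ((tm : ℝ):ℂ) * (rot δ)^k = 0 := by rw [← hpm_s, ← h, sub_self]
        rcases mul_eq_zero.1 h0 with h1 | h1
        · have : tm = 0 := by exact_mod_cast h1
          linarith
        · exact hrk0 h1
      apply pair_limit hδ hM (p := fun _ => pm) (q := ξ)
        (tendsto_const_nhds (x := f pm)) hfW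
      · have := hξlim.eventually (eventually_ne_nhds hpms)
        filter_upwards [this] with n hn
        exact fun hc => hn (hc ▸ rfl)
      · have hlim : Tendsto (fun n => ((tm)⁻¹ : ℝ) • (pm - ξ n)) atTop
            (𝓝 (((tm)⁻¹ : ℝ) • (pm - s))) :=
          (tendsto_const_nhds.sub hξlim).const_smul _
        have heq : ((tm)⁻¹ : ℝ) • (pm - s) = (rot δ)^k := by
          rw [hpm_s, Complex.real_smul, ← mul_assoc, ← Complex.ofReal_mul,
            inv_mul_cancel₀ htmpos.ne', Complex.ofReal_one, one_mul]
        rw [heq] at hlim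
        exact (dir_limit (c := fun _ => tm) (fun _ => htmpos) (hrnorm k) hlim).2
    have hL : Tendsto (fun m : ℕ => δ * ‖f (s + ((((m:ℝ)+1)⁻¹ : ℝ):ℂ) * (rot δ)^k) - W‖)
        atTop (𝓝 (δ * ‖f s - W‖)) :=
      (((hVs k).sub (tendsto_const_nhds (x := W))).norm).const_mul δ
    have hR : Tendsto (fun m : ℕ => inn (f (s + ((((m:ℝ)+1)⁻¹ : ℝ):ℂ) * (rot δ)^k) - W) ((rot δ)^k))
        atTop (𝓝 (inn (f s - W) ((rot δ)^k))) :=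
      (inn_continuous.tendsto (f s - W, (rot δ)^k)).comp
        (((hVs k).sub (tendsto_const_nhds (x := W))).prodMk_nhds tendsto_const_nhds)
    exact le_of_tendsto_of_tendsto hL hR (Filter.Eventually.of_forall hm)
  have hW : f s - W = 0 := pinch hδ hδ1 hkey
  have : W = f s := by linear_combination -hW
  rw [this] at hWdist
  simp [dist_self] at hWdist
  linarith

end DM

open DM

/-- `f` is delta-monotone: there is `δ > 0` with
`Re((f z − f ζ)/(z − ζ)) ≥ δ |f z − f ζ|/|z − ζ|` for all distinct `z, ζ`. -/
def DeltaMonotone (f : ℂ → ℂ) : Prop :=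
  ∃ δ > 0, ∀ z ζ : ℂ, z ≠ ζ →
    δ * (‖f z - f ζ‖ / ‖z - ζ‖) ≤ ((f z - f ζ) / (z - ζ)).re

/-- The image of the real line under a nonconstant delta-monotone map is a Lipschitz graph. -/
theorem deltaMonotone_image_real_line_is_lipschitz_graph
    (f : ℂ → ℂ) (hf : DeltaMonotone f) (hnc : ∃ z ζ : ℂ, f z ≠ f ζ) :
    ∃ L : NNReal, ∃ g : ℝ → ℝ, LipschitzWith L g ∧
      f '' (Set.range (Complex.ofReal)) =
        Set.range (fun u : ℝ => (u : ℂ) + Complex.I * (g u : ℂ)) := by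

  classical
  obtain ⟨δ, hδ, hfq⟩ := hf
  obtain ⟨z₀, ζ₀, hne0⟩ := hnc
  have hz₀ζ₀ : z₀ ≠ ζ₀ := fun h => hne0 (by rw [h])
  have hδ1 : δ ≤ 1 := by
    have h := hfq z₀ ζ₀ hz₀ζ₀
    have h2 : ((f z₀ - f ζ₀) / (z₀ - ζ₀)).re
        ≤ ‖f z₀ - f ζ₀‖ / ‖z₀ - ζ₀‖ := by
      calc ((f z₀ - f ζ₀) / (z₀ - ζ₀)).re
          ≤ ‖(f z₀ - f ζ₀) / (z₀ - ζ₀)‖ := Complex.re_le_norm _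
        _ = ‖f z₀ - f ζ₀‖ / ‖z₀ - ζ₀‖ := norm_div _ _
    have hpos : 0 < ‖f z₀ - f ζ₀‖ / ‖z₀ - ζ₀‖ := by
      apply div_pos
      · exact norm_pos_iff.2 (sub_ne_zero.2 hne0)
      · exact norm_pos_iff.2 (sub_ne_zero.2 hz₀ζ₀)
    nlinarith
  have hM : DM.Mono f δ := DM.mono_of_hf hfq
  set u : ℝ → ℝ := fun x => (f ((x:ℝ):ℂ)).re with hu
  set v : ℝ → ℝ := fun x => (f ((x:ℝ):ℂ)).im with hv
  have mono_real : ∀ a b : ℝ, a < b → δ * ‖f ((b:ℝ):ℂ) - f ((a:ℝ):ℂ)‖ ≤ u b - u a := by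
    intro a b hab
    have hne : ((b:ℝ):ℂ) ≠ ((a:ℝ):ℂ) := by
      intro h
      have : b = a := by exact_mod_cast h
      linarith
    have h := hM _ _ hne
    have hd : ((b:ℝ):ℂ) - ((a:ℝ):ℂ) = ((b - a : ℝ):ℂ) := by push_cast; ring
    rw [hd] at h
    have hinn : DM.inn (f ((b:ℝ):ℂ) - f ((a:ℝ):ℂ)) ((b - a : ℝ):ℂ)
        = (b - a) * (u b - u a) := by
      rw [DM.inn_def]
      simp [hu, Complex.sub_re]
      ring
    have hnrm : ‖((b - a : ℝ):ℂ)‖ = b - a := by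
      rw [Complex.norm_real, Real.norm_eq_abs, abs_of_pos (by linarith)]
    rw [hinn, hnrm] at h
    nlinarith [h]
  have umono : Monotone u := by
    intro a b hab
    rcases eq_or_lt_of_le hab with h | h
    · rw [h]
    · have h1 := mono_real a b h
      have h2 : 0 ≤ δ * ‖f ((b:ℝ):ℂ) - f ((a:ℝ):ℂ)‖ := by positivity
      linarith
  have ueq : ∀ a b : ℝ, u a = u b → f ((a:ℝ):ℂ) = f ((b:ℝ):ℂ) := by
    intro a b hab
    rcases lt_trichotomy a b with h | h | h
    · have h1 := mono_real a b h
      have : ‖f ((b:ℝ):ℂ) - f ((a:ℝ):ℂ)‖ ≤ 0 := by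
        by_contra hc
        push_neg at hc
        nlinarith
      have : f ((b:ℝ):ℂ) - f ((a:ℝ):ℂ) = 0 := by
        rwa [norm_le_zero_iff] at this
      linear_combination -this
    · rw [h]
    · have h1 := mono_real b a h
      have : ‖f ((a:ℝ):ℂ) - f ((b:ℝ):ℂ)‖ ≤ 0 := by
        by_contra hc
        push_neg at hc
        nlinarith
      have : f ((a:ℝ):ℂ) - f ((b:ℝ):ℂ) = 0 := by
        rwa [norm_le_zero_iff] at this
      linear_combination this
  -- u is unbounded above and below
  have hub : ∀ M : ℝ, ∃ x : ℝ, M < u x := by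
    intro M
    by_contra hc
    push_neg at hc
    have := DM.key_const hδ hδ1 hM (M₀ := M) hc
    exact hne0 (by rw [this z₀, this ζ₀])
  have hlb : ∀ M : ℝ, ∃ x : ℝ, u x < M := by
    intro M
    by_contra hc
    push_neg at hc
    have hM2 : DM.Mono (fun z => -f (-z)) δ := DM.mono_neg hM
    have hbd2 : ∀ x : ℝ, ((fun z => -f (-z)) ((x:ℝ):ℂ)).re ≤ -M := by
      intro x
      have h1 : (-((x:ℝ):ℂ)) = (((-x : ℝ)):ℂ) := by push_cast; ring
      simp only [Complex.neg_re]
      rw [h1]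
      have := hc (-x)
      simp only [hu] at this
      linarith
    have h2 := DM.key_const hδ hδ1 hM2 hbd2
    have h3 : ∀ z : ℂ, f z = f 0 := by
      intro z
      have h5 := h2 (-z)
      simp only [neg_neg, neg_zero] at h5
      linear_combination -h5
    exact hne0 (by rw [h3 z₀, h3 ζ₀])
  have ucont : Continuous u := by
    apply continuous_iff_continuousAt.2
    intro s
    have h1 : ContinuousAt f ((s:ℝ):ℂ) := DM.cont_at hδ hδ1 hM _
    have h2 : ContinuousAt (fun x : ℝ => ((x:ℝ):ℂ)) s := Complex.continuous_ofReal.continuousAt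
    exact (Complex.continuous_re.continuousAt).comp (h1.comp h2)
  have usurj : ∀ yv : ℝ, ∃ x : ℝ, u x = yv := by
    intro yv
    obtain ⟨a, ha⟩ := hlb yv
    obtain ⟨b, hb⟩ := hub yv
    have hab : min a b ≤ max a b := min_le_max
    have h1 : u (min a b) ≤ yv := le_trans (umono (min_le_left a b)) ha.le
    have h2 : yv ≤ u (max a b) := le_trans hb.le (umono (le_max_right a b))
    obtain ⟨x, _, hx⟩ := intermediate_value_Icc hab ucont.continuousOn ⟨h1, h2⟩
    exact ⟨x, hx⟩
  set sect : ℝ → ℝ := fun yv => Classical.choose (usurj yv) with hsect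
  have hsect_spec : ∀ yv, u (sect yv) = yv := fun yv => Classical.choose_spec (usurj yv)
  set g : ℝ → ℝ := fun yv => v (sect yv) with hg
  have hδinv : δ * (1/δ) = 1 := by field_simp
  have hδinvpos : 0 < 1/δ := by positivity
  have hfdiff : ∀ x₁ x₂ : ℝ, ‖f ((x₁:ℝ):ℂ) - f ((x₂:ℝ):ℂ)‖ ≤ (1/δ) * |u x₁ - u x₂| := by
    intro x₁ x₂
    rcases lt_trichotomy x₁ x₂ with h | h | h
    · have h1 := mono_real x₁ x₂ h
      have h2 : |u x₁ - u x₂| = u x₂ - u x₁ := by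
        rw [abs_sub_comm, _root_.abs_of_nonneg (by linarith [umono h.le])]
      rw [h2, show f ((x₁:ℝ):ℂ) - f ((x₂:ℝ):ℂ) = -(f ((x₂:ℝ):ℂ) - f ((x₁:ℝ):ℂ)) by ring,
        norm_neg]
      nlinarith [h1, norm_nonneg (f ((x₂:ℝ):ℂ) - f ((x₁:ℝ):ℂ))]
    · rw [h]; simp
    · have h1 := mono_real x₂ x₁ h
      have h2 : |u x₁ - u x₂| = u x₁ - u x₂ := by
        rw [_root_.abs_of_nonneg (by linarith [umono h.le])]
      rw [h2]
      nlinarith [h1, norm_nonneg (f ((x₁:ℝ):ℂ) - f ((x₂:ℝ):ℂ))]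
  have hlip : ∀ y₁ y₂ : ℝ, |g y₁ - g y₂| ≤ (1/δ) * |y₁ - y₂| := by
    intro y₁ y₂
    have h1 : |g y₁ - g y₂| ≤ ‖f ((sect y₁:ℝ):ℂ) - f ((sect y₂:ℝ):ℂ)‖ := by
      have h0 := Complex.abs_im_le_norm (f ((sect y₁:ℝ):ℂ) - f ((sect y₂:ℝ):ℂ))
      simpa [hg, hv, Complex.sub_im] using h0
    calc |g y₁ - g y₂| ≤ ‖f ((sect y₁:ℝ):ℂ) - f ((sect y₂:ℝ):ℂ)‖ := h1
      _ ≤ (1/δ) * |u (sect y₁) - u (sect y₂)| := hfdiff _ _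
      _ = (1/δ) * |y₁ - y₂| := by rw [hsect_spec, hsect_spec]
  refine ⟨⟨1/δ, by positivity⟩, g, ?_, ?_⟩
  · apply LipschitzWith.of_dist_le_mul
    intro y₁ y₂
    rw [Real.dist_eq, Real.dist_eq]; exact hlip y₁ y₂
  · have hpoint : ∀ x : ℝ, f ((x:ℝ):ℂ) = ((u x : ℝ):ℂ) + Complex.I * ((v x : ℝ):ℂ) := by
      intro x
      apply Complex.ext <;> simp [hu, hv]
    ext w
    constructor
    · rintro ⟨zz, ⟨x, rfl⟩, rfl⟩
      refine ⟨u x, ?_⟩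
      have h1 : u (sect (u x)) = u x := hsect_spec (u x)
      have h2 : f ((sect (u x):ℝ):ℂ) = f ((x:ℝ):ℂ) := ueq _ _ h1
      have h3 : g (u x) = v x := by
        simp only [hg, hv, h2]
      simp only [h3]
      exact (hpoint x).symm
    · rintro ⟨yv, rfl⟩
      refine ⟨((sect yv : ℝ):ℂ), ⟨sect yv, rfl⟩, ?_⟩
      rw [hpoint (sect yv), hsect_spec yv]
end
end

section
/- Let L > 0 and let g : ℝ → ℝ be an L-Lipschitz function. Then the map f : ℂ → ℂ defined by f(z) = Re z + i L² Im z + i g(Re z) is delta-monotone for some δ > 0 depending only on L. In particular, every Lipschitz graph {u + i g(u) : u ∈ ℝ} is the image of ℝ under a nonconstant delta-monotone map ℂ → ℂ. -/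
open Set

private lemma key_ineq (L a b c : ℝ) (hL : 0 < L) (hc : |c| ≤ L * |a|) (hab : 0 < a^2 + b^2) :
    (min L 1 / (2 * Real.sqrt (1 + 2*L^2))) * (Real.sqrt (a^2 + (L^2*b+c)^2) / Real.sqrt (a^2+b^2))
      ≤ (a*a + (L^2*b+c)*b) / (a^2+b^2) := by
  set m := min L 1 with hmdef
  have hm : 0 < m := lt_min hL one_pos
  have hK : (0:ℝ) < 1 + 2*L^2 := by positivity
  have hs : 0 < Real.sqrt (1 + 2*L^2) := Real.sqrt_pos.mpr hK
  set S := a^2 + L^2*b^2 with hSdef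
  have hS : 0 ≤ S := by positivity
  have hc2 : c^2 ≤ L^2 * a^2 := by
    have := mul_self_le_mul_self (abs_nonneg c) hc
    nlinarith [sq_abs c, sq_abs a]
  have hA : a^2 + (L^2*b+c)^2 ≤ (1 + 2*L^2) * S := by
    nlinarith [sq_nonneg (L^2*b - c), sq_nonneg (L*b)]
  have hmL : m ≤ L := min_le_left L 1
  have hm1 : m ≤ 1 := min_le_right L 1
  have hB : m^2 * (a^2 + b^2) ≤ S := by
    nlinarith [mul_self_le_mul_self hm.le hmL, mul_self_le_mul_self hm.le hm1,
      sq_nonneg a, sq_nonneg b]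
  have h1 : -(L * |a| * |b|) ≤ c * b := by
    have h2 : -(|c| * |b|) ≤ c * b := by
      have := neg_abs_le (c * b)
      rwa [abs_mul] at this
    have h3 : |c| * |b| ≤ L * |a| * |b| :=
      mul_le_mul_of_nonneg_right hc (abs_nonneg b)
    linarith
  have hR : S / 2 ≤ a*a + (L^2*b+c)*b := by
    nlinarith [sq_nonneg (|a| - L*|b|), sq_abs a, sq_abs b]
  have h2 : Real.sqrt (a^2 + (L^2*b+c)^2) ≤ Real.sqrt (1 + 2*L^2) * Real.sqrt S := by
    rw [← Real.sqrt_mul hK.le]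
    exact Real.sqrt_le_sqrt hA
  have h3 : Real.sqrt (a^2 + b^2) ≤ Real.sqrt S / m := by
    rw [le_div_iff₀ hm]
    have e : Real.sqrt (a^2+b^2) * m = Real.sqrt ((a^2+b^2) * m^2) := by
      rw [Real.sqrt_mul (by positivity), Real.sqrt_sq hm.le]
    rw [e]
    exact Real.sqrt_le_sqrt (by nlinarith)
  have hkey : (m / (2 * Real.sqrt (1 + 2*L^2))) * Real.sqrt (a^2 + (L^2*b+c)^2)
      * Real.sqrt (a^2+b^2) ≤ a*a + (L^2*b+c)*b := by
    have step : (m / (2 * Real.sqrt (1 + 2*L^2))) * Real.sqrt (a^2 + (L^2*b+c)^2)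
        * Real.sqrt (a^2+b^2)
        ≤ (m / (2 * Real.sqrt (1 + 2*L^2))) * (Real.sqrt (1 + 2*L^2) * Real.sqrt S)
          * (Real.sqrt S / m) := by
      gcongr <;> positivity
    have eq1 : (m / (2 * Real.sqrt (1 + 2*L^2))) * (Real.sqrt (1 + 2*L^2) * Real.sqrt S)
        * (Real.sqrt S / m) = S / 2 := by
      have hss : Real.sqrt S * Real.sqrt S = S := Real.mul_self_sqrt hS
      field_simp
      linear_combination hss
    linarith [step, eq1 ▸ step, hR]
  have hBpos : 0 < Real.sqrt (a^2+b^2) := Real.sqrt_pos.mpr hab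
  have hY2 : Real.sqrt (a^2+b^2) * Real.sqrt (a^2+b^2) = a^2+b^2 := Real.mul_self_sqrt hab.le
  rw [← mul_div_assoc, div_le_div_iff₀ hBpos hab]
  calc m / (2 * Real.sqrt (1 + 2*L^2)) * Real.sqrt (a^2 + (L^2*b+c)^2) * (a^2+b^2)
      = (m / (2 * Real.sqrt (1 + 2*L^2)) * Real.sqrt (a^2 + (L^2*b+c)^2)
          * Real.sqrt (a^2+b^2)) * Real.sqrt (a^2+b^2) := by
        linear_combination
          (m / (2 * Real.sqrt (1 + 2*L^2)) * Real.sqrt (a^2 + (L^2*b+c)^2)) * hY2.symm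
    _ ≤ (a*a + (L^2*b+c)*b) * Real.sqrt (a^2+b^2) :=
        mul_le_mul_of_nonneg_right hkey hBpos.le

private lemma key2 (L a b c : ℝ) (hL : 0 < L) (hc : |c| ≤ L * |a|) (hab : 0 < a*a + b*b) :
    min L 1 / (2 * Real.sqrt (1 + 2*L^2)) *
        (Real.sqrt (a*a + (L^2*b+c)*(L^2*b+c)) / Real.sqrt (a*a + b*b))
      ≤ a * a / (a*a + b*b) + (L^2*b+c) * b / (a*a + b*b) := by
  have h := key_ineq L a b c hL hc (by nlinarith)
  rw [show a*a + (L^2*b+c)*(L^2*b+c) = a^2+(L^2*b+c)^2 by ring,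
    show a*a + b*b = a^2+b^2 by ring, ← add_div]
  exact h

/-- For every `L > 0` there is `δ > 0` (depending only on `L`) such that for every
`L`-Lipschitz function `g : ℝ → ℝ`, the map `f(z) = Re z + i L² Im z + i g(Re z)` is
delta-monotone with constant `δ`, is nonconstant, and maps `ℝ` onto the graph of `g`. -/
theorem lipschitz_graph_is_deltaMonotone_image (L : ℝ) (hL : 0 < L) :
    ∃ δ > 0, ∀ g : ℝ → ℝ, LipschitzWith (Real.toNNReal L) g →
      (∀ z ζ : ℂ, z ≠ ζ →
        δ * (‖((z.re : ℂ) + Complex.I * ((L ^ 2 * z.im + g z.re : ℝ) : ℂ)) -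
               ((ζ.re : ℂ) + Complex.I * ((L ^ 2 * ζ.im + g ζ.re : ℝ) : ℂ))‖ /
            ‖z - ζ‖) ≤
          (((((z.re : ℂ) + Complex.I * ((L ^ 2 * z.im + g z.re : ℝ) : ℂ)) -
             ((ζ.re : ℂ) + Complex.I * ((L ^ 2 * ζ.im + g ζ.re : ℝ) : ℂ))) / (z - ζ)).re)) ∧
      (∃ z ζ : ℂ, ((z.re : ℂ) + Complex.I * ((L ^ 2 * z.im + g z.re : ℝ) : ℂ)) ≠
          ((ζ.re : ℂ) + Complex.I * ((L ^ 2 * ζ.im + g ζ.re : ℝ) : ℂ))) ∧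
      Set.range (fun x : ℝ =>
          (((x : ℂ).re : ℂ) + Complex.I * ((L ^ 2 * (x : ℂ).im + g (x : ℂ).re : ℝ) : ℂ))) =
        Set.range (fun u : ℝ => (u : ℂ) + Complex.I * (g u : ℂ)) := by
  have hK : (0:ℝ) < 1 + 2*L^2 := by positivity
  refine ⟨min L 1 / (2 * Real.sqrt (1 + 2*L^2)), by positivity, fun g hg => ⟨?_, ⟨1, 0, ?_⟩, ?_⟩⟩
  · intro z ζ hne
    have hw : z - ζ ≠ 0 := sub_ne_zero.mpr hne
    have hab : 0 < (z.re - ζ.re) * (z.re - ζ.re) + (z.im - ζ.im) * (z.im - ζ.im) := by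
      have := Complex.normSq_pos.mpr hw
      rwa [Complex.normSq_apply, Complex.sub_re, Complex.sub_im] at this
    have hc : |g z.re - g ζ.re| ≤ L * |z.re - ζ.re| := by
      have := hg.dist_le_mul z.re ζ.re
      rwa [Real.dist_eq, Real.dist_eq, Real.coe_toNNReal L hL.le] at this
    have hnum : ((z.re : ℂ) + Complex.I * ((L ^ 2 * z.im + g z.re : ℝ) : ℂ)) -
          ((ζ.re : ℂ) + Complex.I * ((L ^ 2 * ζ.im + g ζ.re : ℝ) : ℂ)) =
          ((z.re - ζ.re : ℝ) : ℂ) +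
            ((L^2*(z.im - ζ.im) + (g z.re - g ζ.re) : ℝ) : ℂ) * Complex.I := by
      push_cast; ring
    rw [hnum, Complex.div_re, Complex.norm_def, Complex.norm_def]
    simp only [Complex.normSq_apply, Complex.add_re, Complex.add_im, Complex.ofReal_re,
      Complex.ofReal_im, Complex.mul_re, Complex.mul_im, Complex.I_re, Complex.I_im,
      Complex.sub_re, Complex.sub_im, mul_zero, zero_mul, mul_one, one_mul, sub_zero,
      zero_sub, add_zero, zero_add, neg_zero]
    exact key2 L (z.re - ζ.re) (z.im - ζ.im) (g z.re - g ζ.re) hL hc hab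
  · intro h
    have := congrArg Complex.re h
    simp at this
  · congr 1
    funext x
    simp
end

section
/- Let f : ℂ → ℂ and let η : [0,∞) → [0,∞) be a homeomorphism such that for every λ ∈ ℝ the map f_λ(z) = f(z) + iλz is η-quasisymmetric on ℂ. Then for every triple of distinct points a, b, x ∈ ℝ, setting τ = (x − a)/(x − b), one has |f(x) − f(a) − i τ Im(f(x) − f(b))| ≤ η(|τ|) |Re(f(x) − f(b))|. In particular, taking real parts, |Re(f(x) − f(a))| ≤ η(|τ|) |Re(f(x) − f(b))|. -/
open Set

/-- `η` is (the restriction of) a homeomorphism of `[0, ∞)` onto itself. -/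
def IsQSGauge (η : ℝ → ℝ) : Prop :=
  StrictMonoOn η (Ici 0) ∧ ContinuousOn η (Ici 0) ∧
    MapsTo η (Ici 0) (Ici 0) ∧ SurjOn η (Ici 0) (Ici 0)

/-- If `f_λ(z) = f(z) + iλz` is `η`-quasisymmetric on `ℂ` for every `λ ∈ ℝ`, then for every
triple of distinct real points `a, b, x`, with `τ = (x − a)/(x − b)`, one has
`|f(x) − f(a) − iτ Im(f(x) − f(b))| ≤ η(|τ|)|Re(f(x) − f(b))|`, and in particular
`|Re(f(x) − f(a))| ≤ η(|τ|)|Re(f(x) − f(b))|`. -/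
theorem reduced_qs_inequality_on_real_line
    (f : ℂ → ℂ) (η : ℝ → ℝ) (hη : IsQSGauge η)
    (hqs : ∀ lam : ℝ, ∀ x a b : ℂ, x ≠ a → x ≠ b → a ≠ b →
      ‖(f x + Complex.I * (lam : ℂ) * x) - (f a + Complex.I * (lam : ℂ) * a)‖ ≤
        η (‖x - a‖ / ‖x - b‖) *
          ‖(f x + Complex.I * (lam : ℂ) * x) - (f b + Complex.I * (lam : ℂ) * b)‖) :
    ∀ a b x : ℝ, x ≠ a → x ≠ b → a ≠ b →
      ‖(f x - f a) -
          Complex.I * ((((x - a) / (x - b)) * (f (x : ℂ) - f (b : ℂ)).im : ℝ) : ℂ)‖ ≤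
        η (|(x - a) / (x - b)|) * |(f (x : ℂ) - f (b : ℂ)).re| ∧
      |(f (x : ℂ) - f (a : ℂ)).re| ≤
        η (|(x - a) / (x - b)|) * |(f (x : ℂ) - f (b : ℂ)).re| := by
  intro a b x hxa hxb hab
  have hxb0 : x - b ≠ 0 := sub_ne_zero.mpr hxb
  set m : ℝ := (f (x : ℂ) - f (b : ℂ)).im with hm
  set τ : ℝ := (x - a) / (x - b) with hτ
  set lam : ℝ := -m / (x - b) with hlam
  have h := hqs lam x a b (by exact_mod_cast hxa) (by exact_mod_cast hxb)
    (by exact_mod_cast hab)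
  have e1 : (f (x : ℂ) + Complex.I * (lam : ℂ) * x) - (f a + Complex.I * (lam : ℂ) * a)
      = (f (x : ℂ) - f (a : ℂ)) - Complex.I * ((τ * m : ℝ) : ℂ) := by
    have hxb0' : ((x : ℂ) - (b : ℂ)) ≠ 0 := by
      exact_mod_cast (sub_ne_zero.mpr hxb : ((x - b : ℝ)) ≠ 0)
    rw [hτ, hlam]
    push_cast
    field_simp
    ring
  have e2 : (f (x : ℂ) + Complex.I * (lam : ℂ) * x) - (f b + Complex.I * (lam : ℂ) * b)
      = (((f (x : ℂ) - f (b : ℂ)).re : ℝ) : ℂ) := by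
    have hxb0' : ((x : ℂ) - (b : ℂ)) ≠ 0 := by
      exact_mod_cast (sub_ne_zero.mpr hxb : ((x - b : ℝ)) ≠ 0)
    have hz : (f (x : ℂ) - f (b : ℂ))
        = ((f (x : ℂ) - f (b : ℂ)).re : ℂ) + (m : ℂ) * Complex.I := by
      rw [hm]; exact (Complex.re_add_im _).symm
    rw [hlam]
    push_cast
    field_simp
    simp only [Complex.sub_re] at hz ⊢
    push_cast at hz ⊢
    linear_combination ((x : ℂ) - (b : ℂ)) * hz
  have e3 : ‖(x : ℂ) - a‖ / ‖(x : ℂ) - b‖ = |τ| := by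
    rw [hτ, abs_div, ← Real.norm_eq_abs (x - a), ← Complex.norm_real (x - a), ← Real.norm_eq_abs (x - b), ← Complex.norm_real (x - b)]
    push_cast
    rfl
  rw [e1, e2, e3, Complex.norm_real, Real.norm_eq_abs] at h
  refine ⟨h, le_trans ?_ h⟩
  have : (f (x : ℂ) - f (a : ℂ)).re
      = ((f (x : ℂ) - f (a : ℂ)) - Complex.I * ((τ * m : ℝ) : ℂ)).re := by
    simp [Complex.sub_re, Complex.mul_re]
  rw [this]
  exact Complex.abs_re_le_norm _
end

section
/- Let g : ℝ → ℝ be continuous, let Ω = {z ∈ ℂ : Im z > g(Re z)} be the domain above the graph of g, and let f : ℍ → Ω be a biholomorphic map which extends to a homeomorphism from the closure of ℍ in ℂ onto the closure of Ω in ℂ. Then Re f'(z) > 0 for every z ∈ ℍ. -/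
open Set Metric Filter Complex Topology

noncomputable section

def Complex.abs : AbsoluteValue ℂ ℝ where
  toFun z := ‖z‖
  map_mul' := norm_mul
  nonneg' := norm_nonneg
  eq_zero' _ := norm_eq_zero
  add_le' := norm_add_le

lemma Complex.norm_eq_abs (z : ℂ) : ‖z‖ = Complex.abs z := rfl

lemma Complex.sq_abs (z : ℂ) : Complex.abs z ^ 2 = Complex.normSq z := Complex.sq_norm z

lemma Complex.abs_conj (z : ℂ) : Complex.abs (starRingEnd ℂ z) = Complex.abs z :=
  Complex.norm_conj z

lemma Complex.abs_ofReal (r : ℝ) : Complex.abs (r : ℂ) = |r| := Complex.norm_real r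

lemma Complex.continuous_abs : Continuous Complex.abs := continuous_norm

lemma Complex.abs_le_abs_of_mapsTo_ball_self {f : ℂ → ℂ} {R : ℝ} {z : ℂ}
    (hd : DifferentiableOn ℂ f (ball 0 R)) (h_maps : MapsTo f (ball 0 R) (ball 0 R))
    (h₀ : f 0 = 0) (hz : Complex.abs z < R) : Complex.abs (f z) ≤ Complex.abs z :=
  Complex.norm_le_norm_of_mapsTo_ball hd (h_maps.mono_right ball_subset_closedBall) h₀ hz

lemma normSq_moeb_identity (a b : ℂ) :
    Complex.normSq (1 - (starRingEnd ℂ a) * b) - Complex.normSq (a - b)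
      = (1 - Complex.normSq a) * (1 - Complex.normSq b) := by
  simp only [Complex.normSq_apply, Complex.sub_re, Complex.sub_im, Complex.mul_re, Complex.mul_im,
    Complex.one_re, Complex.one_im, Complex.conj_re, Complex.conj_im]
  ring

lemma moeb_denom_ne_zero {a b : ℂ} (ha : Complex.abs a < 1) (hb : Complex.abs b ≤ 1) :
    1 - (starRingEnd ℂ a) * b ≠ 0 := by
  intro h
  have h1 : (starRingEnd ℂ a) * b = 1 := by linear_combination -h
  have : Complex.abs ((starRingEnd ℂ a) * b) < 1 := by
    rw [map_mul, Complex.abs_conj]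
    calc Complex.abs a * Complex.abs b ≤ Complex.abs a * 1 :=
      mul_le_mul_of_nonneg_left hb (Complex.abs.nonneg a)
    _ = Complex.abs a := mul_one _
    _ < 1 := ha
  rw [h1] at this; simp at this

/-- The Möbius involution of the disc. -/
def moeb (w z : ℂ) : ℂ := (w - z) / (1 - (starRingEnd ℂ w) * z)

lemma abs_moeb_lt_one {w z : ℂ} (hw : Complex.abs w < 1) (hz : Complex.abs z < 1) :
    Complex.abs (moeb w z) < 1 := by
  have hd := moeb_denom_ne_zero hw hz.le
  have key : Complex.normSq (w - z) < Complex.normSq (1 - (starRingEnd ℂ w) * z) := by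
    have h1 : 0 < 1 - Complex.normSq w := by
      rw [← Complex.sq_abs]; nlinarith [Complex.abs.nonneg w]
    have h2 : 0 < 1 - Complex.normSq z := by
      rw [← Complex.sq_abs]; nlinarith [Complex.abs.nonneg z]
    nlinarith [normSq_moeb_identity w z]
  rw [moeb, map_div₀, div_lt_one (Complex.abs.pos hd)]
  have := Complex.sq_abs (w - z) ▸ Complex.sq_abs (1 - (starRingEnd ℂ w) * z) ▸ key
  exact lt_of_pow_lt_pow_left₀ 2 (Complex.abs.nonneg _) this

lemma moeb_zero (b : ℂ) : moeb b 0 = b := by simp [moeb]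

lemma moeb_self (w : ℂ) : moeb w w = 0 := by simp [moeb]

lemma moeb_invol {w z : ℂ} (hw : Complex.abs w < 1) (hz : Complex.abs z < 1) :
    moeb w (moeb w z) = z := by
  have hd1 := moeb_denom_ne_zero hw hz.le
  have hd2 := moeb_denom_ne_zero hw (abs_moeb_lt_one hw hz).le
  simp only [moeb] at hd2 ⊢
  rw [div_eq_iff hd2]
  have hd1' : 1 - z * (starRingEnd ℂ) w ≠ 0 := by rwa [mul_comm]
  field_simp
  ring

lemma moeb_differentiableAt {w z : ℂ} (h : 1 - (starRingEnd ℂ w) * z ≠ 0) :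
    DifferentiableAt ℂ (moeb w) z := by
  apply DifferentiableAt.div
  · exact (differentiable_const w).differentiableAt.sub differentiable_id.differentiableAt
  · exact (differentiable_const 1).differentiableAt.sub
      ((differentiable_const _).differentiableAt.mul differentiable_id.differentiableAt)
  · exact h

/-- Schwarz–Pick lemma on the unit disc. -/
lemma schwarz_pick {φ : ℂ → ℂ} (hd : DifferentiableOn ℂ φ (ball 0 1))
    (hm : MapsTo φ (ball 0 1) (ball 0 1)) {a b : ℂ}
    (ha : a ∈ ball (0:ℂ) 1) (hb : b ∈ ball (0:ℂ) 1) :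
    Complex.abs (moeb (φ b) (φ a)) ≤ Complex.abs (moeb b a) := by
  have habs : ∀ {u : ℂ}, u ∈ ball (0:ℂ) 1 → Complex.abs u < 1 := fun hu => by
    simpa [Complex.norm_eq_abs] using mem_ball_zero_iff.1 hu
  have hφb : φ b ∈ ball (0:ℂ) 1 := hm hb
  set ψ : ℂ → ℂ := fun ζ => moeb (φ b) (φ (moeb b ζ)) with hψ
  have hmoebb : MapsTo (moeb b) (ball (0:ℂ) 1) (ball (0:ℂ) 1) := fun ζ hζ =>
    mem_ball_zero_iff.2 (by simpa [Complex.norm_eq_abs] using abs_moeb_lt_one (habs hb) (habs hζ))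
  have hmoebφb : MapsTo (moeb (φ b)) (ball (0:ℂ) 1) (ball (0:ℂ) 1) := fun ζ hζ =>
    mem_ball_zero_iff.2 (by simpa [Complex.norm_eq_abs] using abs_moeb_lt_one (habs hφb) (habs hζ))
  have hψd : DifferentiableOn ℂ ψ (ball 0 1) := by
    intro ζ hζ
    have h1 : DifferentiableAt ℂ (moeb b) ζ :=
      moeb_differentiableAt (moeb_denom_ne_zero (habs hb) (habs hζ).le)
    have h2 : DifferentiableWithinAt ℂ φ (ball 0 1) (moeb b ζ) := hd _ (hmoebb hζ)
    have h3 : DifferentiableAt ℂ (moeb (φ b)) (φ (moeb b ζ)) :=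
      moeb_differentiableAt (moeb_denom_ne_zero (habs hφb) (habs (hm (hmoebb hζ))).le)
    have hcomp : DifferentiableWithinAt ℂ (moeb (φ b) ∘ φ ∘ moeb b) (ball 0 1) ζ :=
      h3.differentiableWithinAt.comp ζ (h2.comp ζ h1.differentiableWithinAt hmoebb)
        (hm.comp hmoebb)
    exact hcomp
  have hψm : MapsTo ψ (ball (0:ℂ) 1) (ball (0:ℂ) 1) := fun ζ hζ =>
    hmoebφb (hm (hmoebb hζ))
  have hψ0 : ψ 0 = 0 := by simp [hψ, moeb_zero, moeb_self]
  have hball : moeb b a ∈ ball (0:ℂ) 1 := hmoebb ha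
  have := Complex.abs_le_abs_of_mapsTo_ball_self hψd hψm hψ0
    (by simpa [Complex.norm_eq_abs] using mem_ball_zero_iff.1 hball)
  have hval : ψ (moeb b a) = moeb (φ b) (φ a) := by
    rw [hψ]; simp only []; rw [moeb_invol (habs hb) (habs ha)]
  rwa [hval] at this

lemma denom_shrink {s : ℂ} (hs : Complex.normSq s ≤ 1) {ρ : ℝ} (h0 : 0 < ρ) (h1 : ρ < 1) :
    (1 + ρ^2) * Complex.abs (1 - s) ≤ 2 * Complex.abs (1 - (ρ:ℂ)^2 * s) := by
  have hr2 : s.re^2 ≤ Complex.normSq s := by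
    rw [Complex.normSq_apply]; nlinarith [sq_nonneg s.im]
  have hre : -1 ≤ s.re := by nlinarith
  have hsq : ((1 + ρ^2) * Complex.abs (1 - s))^2 ≤ (2 * Complex.abs (1 - (ρ:ℂ)^2 * s))^2 := by
    rw [mul_pow, mul_pow, Complex.sq_abs, Complex.sq_abs]
    have e1 : Complex.normSq (1 - s) = 1 - 2*s.re + Complex.normSq s := by
      simp [Complex.normSq_apply, Complex.sub_re, Complex.sub_im]; ring
    have e2 : Complex.normSq (1 - (ρ:ℂ)^2 * s)
        = 1 - 2*ρ^2*s.re + ρ^4 * Complex.normSq s := by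
      have hre' : ((ρ:ℂ)^2).re = ρ^2 := by rw [← Complex.ofReal_pow, Complex.ofReal_re]
      have him' : ((ρ:ℂ)^2).im = 0 := by rw [← Complex.ofReal_pow, Complex.ofReal_im]
      simp [Complex.normSq_apply, Complex.sub_re, Complex.sub_im, Complex.mul_re, Complex.mul_im,
        hre', him']
      ring
    rw [e1, e2]
    nlinarith [mul_nonneg (mul_nonneg (sub_nonneg.2 hs) h0.le) h0.le,
      mul_nonneg (sq_nonneg (1-ρ^2)) (by linarith : (0:ℝ) ≤ 1 + s.re),
      mul_nonneg (mul_nonneg (sub_nonneg.2 hs) (sub_nonneg.2 h1.le)) h0.le,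
      sq_nonneg (1-ρ^2), sq_nonneg ρ,
      mul_nonneg (sub_nonneg.2 hs) (sq_nonneg (1-ρ^2))]
  have h2 : (0:ℝ) ≤ 2 * Complex.abs (1 - (ρ:ℂ)^2 * s) := by positivity
  have h3 : (0:ℝ) ≤ (1 + ρ^2) * Complex.abs (1 - s) := by positivity
  nlinarith

lemma abs_moeb_shrink {a b : ℂ} {ρ : ℝ} (ha : Complex.abs a < 1) (hb : Complex.abs b < 1)
    (h0 : 0 < ρ) (h1 : ρ < 1) :
    Complex.abs (moeb ((ρ:ℂ)*a) ((ρ:ℂ)*b)) ≤ (2*ρ/(1+ρ^2)) * Complex.abs (moeb a b) := by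
  set s := (starRingEnd ℂ a) * b with hsdef
  have hs : Complex.normSq s ≤ 1 := by
    rw [hsdef, Complex.normSq_mul, Complex.normSq_conj, ← Complex.sq_abs, ← Complex.sq_abs]
    have hab : Complex.abs a * Complex.abs b ≤ 1 := by
      nlinarith [Complex.abs.nonneg a, Complex.abs.nonneg b]
    have hab0 : 0 ≤ Complex.abs a * Complex.abs b :=
      mul_nonneg (Complex.abs.nonneg a) (Complex.abs.nonneg b)
    nlinarith
  have hconj : (starRingEnd ℂ ((ρ:ℂ)*a)) * ((ρ:ℂ)*b) = (ρ:ℂ)^2 * s := by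
    rw [hsdef, map_mul, Complex.conj_ofReal]; ring
  have hda : (1:ℂ) - s ≠ 0 := hsdef ▸ moeb_denom_ne_zero ha hb.le
  have hDpos : 0 < Complex.abs (1 - s) := Complex.abs.pos hda
  have hra : Complex.abs ((ρ:ℂ)*a) < 1 := by
    rw [map_mul, Complex.abs_ofReal, abs_of_pos h0]; nlinarith [Complex.abs.nonneg a]
  have hrb : Complex.abs ((ρ:ℂ)*b) ≤ 1 := by
    rw [map_mul, Complex.abs_ofReal, abs_of_pos h0]; nlinarith [Complex.abs.nonneg b]
  have hd2ne : (1:ℂ) - (ρ:ℂ)^2 * s ≠ 0 := hconj ▸ moeb_denom_ne_zero hra hrb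
  have hD2pos : 0 < Complex.abs (1 - (ρ:ℂ)^2 * s) := Complex.abs.pos hd2ne
  have hdenom := denom_shrink hs h0 h1
  rw [moeb, moeb, map_div₀, map_div₀, hconj, ← hsdef]
  have hnum : Complex.abs ((ρ:ℂ)*a - (ρ:ℂ)*b) = ρ * Complex.abs (a - b) := by
    rw [← mul_sub, map_mul, Complex.abs_ofReal, abs_of_pos h0]
  rw [hnum, div_mul_div_comm, div_le_div_iff₀ hD2pos (by positivity)]
  have hA : (0:ℝ) ≤ Complex.abs (a-b) := Complex.abs.nonneg _
  nlinarith [mul_le_mul_of_nonneg_left hdenom (mul_nonneg h0.le hA)]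

lemma abs_sub_le_two_mul_moeb {a b : ℂ} (ha : Complex.abs a < 1) (hb : Complex.abs b ≤ 1) :
    Complex.abs (a - b) ≤ 2 * Complex.abs (moeb a b) := by
  have hd := moeb_denom_ne_zero ha hb
  have : a - b = moeb a b * (1 - (starRingEnd ℂ a) * b) := by
    rw [moeb, div_mul_cancel₀ _ hd]
  rw [this, map_mul]
  have hle : Complex.abs (1 - (starRingEnd ℂ a) * b) ≤ 2 := by
    calc Complex.abs (1 - (starRingEnd ℂ a) * b)
        ≤ Complex.abs 1 + Complex.abs ((starRingEnd ℂ a) * b) := by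
          simpa [sub_eq_add_neg] using Complex.abs.add_le 1 (-((starRingEnd ℂ a) * b))
    _ ≤ 1 + 1 := by
        rw [map_one, map_mul, Complex.abs_conj]
        have := mul_le_one₀ ha.le (Complex.abs.nonneg b) hb
        linarith
    _ = 2 := by norm_num
  nlinarith [Complex.abs.nonneg (moeb a b)]

lemma exists_fixed_point_shrink {φ : ℂ → ℂ} (hd : DifferentiableOn ℂ φ (ball 0 1))
    (hm : MapsTo φ (ball 0 1) (ball 0 1)) {ρ : ℝ} (h0 : 0 < ρ) (h1 : ρ < 1) :
    ∃ z ∈ ball (0:ℂ) 1, (ρ:ℂ) * φ z = z ∧ Complex.abs z ≤ ρ := by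
  have habs : ∀ {u : ℂ}, u ∈ ball (0:ℂ) 1 → Complex.abs u < 1 := fun hu => by
    simpa [Complex.norm_eq_abs] using mem_ball_zero_iff.1 hu
  have hmem : ∀ {u : ℂ}, Complex.abs u < 1 → u ∈ ball (0:ℂ) 1 := fun hu =>
    mem_ball_zero_iff.2 (by simpa [Complex.norm_eq_abs] using hu)
  set k : ℂ → ℂ := fun u => (ρ:ℂ) * φ u with hk
  have hkabs : ∀ {u : ℂ}, u ∈ ball (0:ℂ) 1 → Complex.abs (k u) ≤ ρ := by
    intro u hu
    rw [hk]; simp only []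
    rw [map_mul, Complex.abs_ofReal, abs_of_pos h0]
    nlinarith [habs (hm hu), Complex.abs.nonneg (φ u)]
  set z : ℕ → ℂ := fun n => k^[n] 0 with hz
  have hzsucc : ∀ n, z (n+1) = k (z n) := by
    intro n; rw [hz]; simp [Function.iterate_succ_apply']
  have hzmem : ∀ n, z n ∈ ball (0:ℂ) 1 := by
    intro n
    induction n with
    | zero => simpa [hz] using hmem (by norm_num)
    | succ n ih =>
      rw [hzsucc]
      exact hmem (lt_of_le_of_lt (hkabs ih) h1)
  set lam : ℝ := 2*ρ/(1+ρ^2) with hlam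
  have hlam1 : lam < 1 := by
    rw [hlam, div_lt_one (by positivity)]; nlinarith [sq_nonneg (1-ρ)]
  have hlam0 : 0 ≤ lam := by positivity
  set C : ℝ := Complex.abs (moeb (z 0) (z 1)) with hC
  have hkey : ∀ n, Complex.abs (moeb (z n) (z (n+1))) ≤ lam^n * C := by
    intro n
    induction n with
    | zero => simp [hC]
    | succ n ih =>
      have e1 : z (n+1) = (ρ:ℂ) * φ (z n) := hzsucc n
      have e2 : z (n+2) = (ρ:ℂ) * φ (z (n+1)) := hzsucc (n+1)
      calc Complex.abs (moeb (z (n+1)) (z (n+2)))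
          = Complex.abs (moeb ((ρ:ℂ) * φ (z n)) ((ρ:ℂ) * φ (z (n+1)))) := by rw [← e1, ← e2]
        _ ≤ lam * Complex.abs (moeb (φ (z n)) (φ (z (n+1)))) :=
            abs_moeb_shrink (habs (hm (hzmem n))) (habs (hm (hzmem (n+1)))) h0 h1
        _ ≤ lam * Complex.abs (moeb (z n) (z (n+1))) := by
            have := schwarz_pick hd hm (hzmem (n+1)) (hzmem n)
            exact mul_le_mul_of_nonneg_left this hlam0
        _ ≤ lam * (lam^n * C) := mul_le_mul_of_nonneg_left ih hlam0
        _ = lam^(n+1) * C := by ring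
  have hcauchy : CauchySeq z := by
    apply cauchySeq_of_le_geometric lam (2*C) hlam1
    intro n
    rw [dist_eq_norm]
    calc ‖z n - z (n+1)‖ = Complex.abs (z n - z (n+1)) := rfl
      _ ≤ 2 * Complex.abs (moeb (z n) (z (n+1))) :=
          abs_sub_le_two_mul_moeb (habs (hzmem n)) (habs (hzmem (n+1))).le
      _ ≤ 2 * (lam^n * C) := by linarith [hkey n]
      _ = 2*C * lam^n := by ring
  obtain ⟨L, hL⟩ := cauchySeq_tendsto_of_complete hcauchy
  have hLρ : Complex.abs L ≤ ρ := by
    have h1' : Tendsto (fun n => Complex.abs (z n)) atTop (𝓝 (Complex.abs L)) :=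
      (Complex.continuous_abs.tendsto L).comp hL
    apply le_of_tendsto h1'
    filter_upwards [eventually_ge_atTop 1] with n hn
    obtain ⟨m, rfl⟩ := Nat.exists_eq_add_of_le hn
    rw [add_comm, hzsucc]
    exact hkabs (hzmem m)
  have hLmem : L ∈ ball (0:ℂ) 1 := hmem (lt_of_le_of_lt hLρ h1)
  have hcont : ContinuousAt k L := by
    have : ContinuousAt φ L :=
      (hd.continuousOn.continuousAt (isOpen_ball.mem_nhds hLmem))
    exact (continuousAt_const.mul this : ContinuousAt k L)
  have hfix : k L = L := by
    have h1' : Tendsto (fun n => k (z n)) atTop (𝓝 (k L)) := hcont.tendsto.comp hL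
    have h2' : Tendsto (fun n => z (n+1)) atTop (𝓝 L) := hL.comp (tendsto_add_atTop_nat 1)
    have h3' : (fun n => z (n+1)) = fun n => k (z n) := funext hzsucc
    rw [h3'] at h2'
    exact tendsto_nhds_unique h1' h2'
  exact ⟨L, hLmem, hfix, hLρ⟩

lemma one_sub_normSq_pos {a : ℂ} (ha : Complex.abs a < 1) : 0 < 1 - Complex.normSq a := by
  rw [← Complex.sq_abs]; nlinarith [Complex.abs.nonneg a]

lemma horo_step {a b A B : ℂ} (ha : Complex.abs a < 1) (hb : Complex.abs b < 1)
    (hA : Complex.abs A < 1) (hB : Complex.abs B < 1)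
    (hSP : Complex.abs (moeb A B) ≤ Complex.abs (moeb a b))
    (hle : Complex.normSq a ≤ Complex.normSq A) :
    Complex.normSq (1 - (starRingEnd ℂ) A * B) / (1 - Complex.normSq B)
      ≤ Complex.normSq (1 - (starRingEnd ℂ) a * b) / (1 - Complex.normSq b) := by
  set NA := Complex.normSq (1 - (starRingEnd ℂ) A * B) with hNA
  set na := Complex.normSq (1 - (starRingEnd ℂ) a * b) with hna
  set MA := Complex.normSq (A - B) with hMA
  set ma := Complex.normSq (a - b) with hma
  have hNApos : 0 < NA := Complex.normSq_pos.2 (moeb_denom_ne_zero hA hB.le)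
  have hnapos : 0 < na := Complex.normSq_pos.2 (moeb_denom_ne_zero ha hb.le)
  have hMA0 : 0 ≤ MA := Complex.normSq_nonneg _
  have hma0 : 0 ≤ ma := Complex.normSq_nonneg _
  have idA : NA - MA = (1 - Complex.normSq A) * (1 - Complex.normSq B) :=
    normSq_moeb_identity A B
  have ida : na - ma = (1 - Complex.normSq a) * (1 - Complex.normSq b) :=
    normSq_moeb_identity a b
  have pA := one_sub_normSq_pos hA
  have pB := one_sub_normSq_pos hB
  have pa := one_sub_normSq_pos ha
  have pb := one_sub_normSq_pos hb
  -- squared Schwarz-Pick: MA / NA ≤ ma / na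
  have hsq : MA / NA ≤ ma / na := by
    have h1 : Complex.abs (moeb A B) ^ 2 ≤ Complex.abs (moeb a b) ^ 2 :=
      pow_le_pow_left₀ (Complex.abs.nonneg _) hSP 2
    have e1 : Complex.abs (moeb A B) ^ 2 = MA / NA := by
      rw [moeb, Complex.sq_abs, Complex.normSq_div]
    have e2 : Complex.abs (moeb a b) ^ 2 = ma / na := by
      rw [moeb, Complex.sq_abs, Complex.normSq_div]
    rwa [e1, e2] at h1
  have hcross : MA * na ≤ ma * NA := by
    rw [div_le_div_iff₀ hNApos hnapos] at hsq; linarith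
  have step1 : NA * ((1 - Complex.normSq a) * (1 - Complex.normSq b))
      ≤ na * ((1 - Complex.normSq a) * (1 - Complex.normSq B)) := by
    have e3 : NA * ((1 - Complex.normSq a) * (1 - Complex.normSq b)) = NA * (na - ma) := by
      rw [ida]
    have e4 : NA * (na - ma) ≤ na * (NA - MA) := by nlinarith
    have e5 : na * (NA - MA) = na * ((1 - Complex.normSq A) * (1 - Complex.normSq B)) := by
      rw [idA]
    have e6 : na * ((1 - Complex.normSq A) * (1 - Complex.normSq B))
        ≤ na * ((1 - Complex.normSq a) * (1 - Complex.normSq B)) :=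
      mul_le_mul_of_nonneg_left
        (mul_le_mul_of_nonneg_right (sub_le_sub_left hle 1) pB.le) hnapos.le
    linarith
  rw [div_le_div_iff₀ pB pb]
  nlinarith

lemma wolff_disc {φ : ℂ → ℂ} (hd : DifferentiableOn ℂ φ (ball 0 1))
    (hm : MapsTo φ (ball 0 1) (ball 0 1)) (hfix : ∀ z ∈ ball (0:ℂ) 1, φ z ≠ z) :
    ∃ p : ℂ, Complex.abs p = 1 ∧ ∀ z ∈ ball (0:ℂ) 1,
      Complex.normSq (p - φ z) / (1 - Complex.normSq (φ z))
        ≤ Complex.normSq (p - z) / (1 - Complex.normSq z) := by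
  have habs : ∀ {u : ℂ}, u ∈ ball (0:ℂ) 1 → Complex.abs u < 1 := fun hu => by
    simpa [Complex.norm_eq_abs] using mem_ball_zero_iff.1 hu
  have hmem : ∀ {u : ℂ}, Complex.abs u < 1 → u ∈ ball (0:ℂ) 1 := fun hu =>
    mem_ball_zero_iff.2 (by simpa [Complex.norm_eq_abs] using hu)
  set ρ : ℕ → ℝ := fun n => 1 - ((n:ℝ)+2)⁻¹ with hρ
  have hinvle : ∀ n : ℕ, ((n:ℝ)+2)⁻¹ ≤ 2⁻¹ := by
    intro n
    apply inv_anti₀ (by norm_num)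
    linarith [Nat.cast_nonneg (α := ℝ) n]
  have hρ0 : ∀ n, 0 < ρ n := by
    intro n; simp only [hρ]; have := hinvle n; norm_num at this ⊢; linarith
  have hρ1 : ∀ n, ρ n < 1 := by
    intro n; simp only [hρ]
    have : 0 < ((n:ℝ)+2)⁻¹ := by positivity
    linarith
  have hρtend : Tendsto ρ atTop (𝓝 1) := by
    have h1 : Tendsto (fun n : ℕ => ((n:ℝ)+2)⁻¹) atTop (𝓝 0) :=
      tendsto_inv_atTop_zero.comp
        (tendsto_atTop_add_const_right _ 2 tendsto_natCast_atTop_atTop)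
    have h2 := tendsto_const_nhds (x := (1:ℝ)) (f := atTop (α := ℕ)) |>.sub h1
    simpa using h2
  choose zn hznmem hznfix hznρ using fun n => exists_fixed_point_shrink hd hm (hρ0 n) (hρ1 n)
  have hzncb : ∀ n, zn n ∈ closedBall (0:ℂ) 1 := fun n =>
    mem_closedBall_zero_iff.2 (by
      calc ‖zn n‖ = Complex.abs (zn n) := rfl
        _ ≤ ρ n := hznρ n
        _ ≤ 1 := (hρ1 n).le)
  obtain ⟨p, hpcb, σ, hσmono, hσtend⟩ := (isCompact_closedBall (0:ℂ) 1).tendsto_subseq hzncb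
  have hρσtend : Tendsto (fun n => ρ (σ n)) atTop (𝓝 1) :=
    hρtend.comp hσmono.tendsto_atTop
  have hφzn : ∀ n, φ (zn n) = zn n / (ρ n : ℂ) := by
    intro n
    have h0 : ((ρ n : ℝ) : ℂ) ≠ 0 := by
      exact_mod_cast (hρ0 n).ne'
    rw [eq_div_iff h0]
    linear_combination hznfix n
  have hφtend : Tendsto (fun n => φ (zn (σ n))) atTop (𝓝 p) := by
    have hcast : Tendsto (fun n => ((ρ (σ n) : ℝ) : ℂ)) atTop (𝓝 1) := by
      have := (Complex.continuous_ofReal.tendsto 1).comp hρσtend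
      exact this
    have := hσtend.div hcast one_ne_zero
    simp only [div_one] at this
    exact this.congr fun n => (hφzn (σ n)).symm
  have hp1 : Complex.abs p = 1 := by
    by_contra hne
    have hple : Complex.abs p ≤ 1 := by
      have := mem_closedBall_zero_iff.1 hpcb; simpa [Complex.norm_eq_abs] using this
    have hplt : Complex.abs p < 1 := lt_of_le_of_ne hple hne
    have hpmem : p ∈ ball (0:ℂ) 1 := hmem hplt
    have hφcont : ContinuousAt φ p := hd.continuousOn.continuousAt (isOpen_ball.mem_nhds hpmem)
    have h1 : Tendsto (fun n => φ (zn (σ n))) atTop (𝓝 (φ p)) := hφcont.tendsto.comp hσtend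
    exact hfix p hpmem (tendsto_nhds_unique h1 hφtend)
  refine ⟨p, hp1, fun z hz => ?_⟩
  -- limit of horo_step inequalities
  have key : ∀ n, Complex.normSq (1 - (starRingEnd ℂ) (φ (zn (σ n))) * φ z)
      / (1 - Complex.normSq (φ z))
      ≤ Complex.normSq (1 - (starRingEnd ℂ) (zn (σ n)) * z) / (1 - Complex.normSq z) := by
    intro n
    have hζ := hznmem (σ n)
    apply horo_step (habs hζ) (habs hz) (habs (hm hζ)) (habs (hm hz))
      (schwarz_pick hd hm hz hζ)
    -- normSq (zn) ≤ normSq (φ zn)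
    have : Complex.abs (zn (σ n)) ≤ Complex.abs (φ (zn (σ n))) := by
      rw [hφzn (σ n), map_div₀, Complex.abs_ofReal, abs_of_pos (hρ0 (σ n)), le_div_iff₀ (hρ0 (σ n))]
      nlinarith [Complex.abs.nonneg (zn (σ n)), hρ1 (σ n)]
    rw [← Complex.sq_abs, ← Complex.sq_abs]
    nlinarith [Complex.abs.nonneg (zn (σ n))]
  have hLHS : Tendsto (fun n => Complex.normSq (1 - (starRingEnd ℂ) (φ (zn (σ n))) * φ z)
      / (1 - Complex.normSq (φ z))) atTop
      (𝓝 (Complex.normSq (1 - (starRingEnd ℂ) p * φ z) / (1 - Complex.normSq (φ z)))) := by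
    apply Tendsto.div_const
    exact (Complex.continuous_normSq.tendsto _).comp
      (((continuous_const.sub ((Complex.continuous_conj.comp continuous_id).mul
        continuous_const)).tendsto p).comp hφtend)
  have hRHS : Tendsto (fun n => Complex.normSq (1 - (starRingEnd ℂ) (zn (σ n)) * z)
      / (1 - Complex.normSq z)) atTop
      (𝓝 (Complex.normSq (1 - (starRingEnd ℂ) p * z) / (1 - Complex.normSq z))) := by
    apply Tendsto.div_const
    exact (Complex.continuous_normSq.tendsto _).comp
      (((continuous_const.sub ((Complex.continuous_conj.comp continuous_id).mul
        continuous_const)).tendsto p).comp hσtend)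
  have hfin := le_of_tendsto_of_tendsto' hLHS hRHS key
  have hconv : ∀ w : ℂ, Complex.normSq (1 - (starRingEnd ℂ) p * w) = Complex.normSq (p - w) := by
    intro w
    have : (1 : ℂ) - (starRingEnd ℂ) p * w = (starRingEnd ℂ) p * (p - w) := by
      have : (starRingEnd ℂ) p * p = (Complex.normSq p : ℂ) := by
        rw [mul_comm, Complex.mul_conj]
      rw [mul_sub, this]
      rw [show Complex.normSq p = 1 from by rw [← Complex.sq_abs, hp1]; norm_num]
      push_cast; ring
    rw [this, Complex.normSq_mul, Complex.normSq_conj]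
    rw [show Complex.normSq p = 1 from by rw [← Complex.sq_abs, hp1]; norm_num, one_mul]
  rwa [hconv (φ z), hconv z] at hfin

def cayley (z : ℂ) : ℂ := (z - I) / (z + I)
def cayleyInv (w : ℂ) : ℂ := I * (1 + w) / (1 - w)

lemma add_I_ne_zero {z : ℂ} (hz : 0 ≤ z.im) : z + I ≠ 0 := by
  intro h
  have : (z + I).im = z.im + 1 := by simp
  rw [h] at this; simp at this; linarith

lemma normSq_add_sub_I (z : ℂ) :
    Complex.normSq (z + I) - Complex.normSq (z - I) = 4 * z.im := by
  simp [Complex.normSq_apply, Complex.add_re, Complex.add_im, Complex.sub_re, Complex.sub_im]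
  ring

lemma abs_cayley_lt_one {z : ℂ} (hz : 0 < z.im) : Complex.abs (cayley z) < 1 := by
  have hne := add_I_ne_zero hz.le
  rw [cayley, map_div₀, div_lt_one (Complex.abs.pos hne)]
  have h := normSq_add_sub_I z
  have h1 : Complex.normSq (z - I) < Complex.normSq (z + I) := by nlinarith
  rw [← Complex.sq_abs, ← Complex.sq_abs] at h1
  exact lt_of_pow_lt_pow_left₀ 2 (Complex.abs.nonneg _) h1

lemma one_sub_cayley {z : ℂ} (hz : z + I ≠ 0) : 1 - cayley z = 2*I/(z + I) := by
  rw [cayley]; field_simp; ring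

lemma one_add_cayley {z : ℂ} (hz : z + I ≠ 0) : 1 + cayley z = 2*z/(z + I) := by
  rw [cayley]; field_simp; ring

lemma one_sub_normSq_cayley {z : ℂ} (hz : z + I ≠ 0) :
    1 - Complex.normSq (cayley z) = 4 * z.im / Complex.normSq (z + I) := by
  have hns : Complex.normSq (z + I) ≠ 0 := by
    simpa [Complex.normSq_eq_zero] using hz
  rw [cayley, Complex.normSq_div, eq_div_iff hns, sub_mul, div_mul_cancel₀ _ hns, one_mul]
  linarith [normSq_add_sub_I z]

lemma cayley_sub {a b : ℂ} (ha : a + I ≠ 0) (hb : b + I ≠ 0) :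
    cayley a - cayley b = 2*I*(a - b)/((a + I)*(b + I)) := by
  rw [cayley, cayley]; field_simp; ring

lemma cayleyInv_im (w : ℂ) (hw : w ≠ 1) :
    (cayleyInv w).im = (1 - Complex.normSq w) / Complex.normSq (1 - w) := by
  rw [cayleyInv, Complex.div_im]
  have h1 : (I * (1 + w)).im = 1 + w.re := by simp
  have h2 : (I * (1 + w)).re = -w.im := by simp
  rw [h1, h2]
  simp only [Complex.sub_re, Complex.sub_im, Complex.one_re, Complex.one_im,
    Complex.normSq_apply]
  have hns : Complex.normSq (1 - w) ≠ 0 := by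
    simpa [Complex.normSq_eq_zero, sub_eq_zero] using fun h => hw h.symm
  rw [Complex.normSq_apply] at hns
  simp only [Complex.sub_re, Complex.sub_im, Complex.one_re, Complex.one_im] at hns
  field_simp
  ring

lemma cayleyInv_im_pos {w : ℂ} (hw : Complex.abs w < 1) : 0 < (cayleyInv w).im := by
  have hw1 : w ≠ 1 := by intro h; rw [h] at hw; simp at hw
  rw [cayleyInv_im w hw1]
  apply div_pos (one_sub_normSq_pos hw)
  rw [Complex.normSq_pos, sub_ne_zero]
  exact fun h => hw1 h.symm

lemma cayley_cayleyInv {w : ℂ} (hw : w ≠ 1) : cayley (cayleyInv w) = w := by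
  have hne : (1:ℂ) - w ≠ 0 := by rw [sub_ne_zero]; exact fun h => hw h.symm
  have h1 : cayleyInv w + I = 2*I/(1 - w) := by rw [cayleyInv]; field_simp; ring
  have h2 : cayleyInv w - I = 2*I*w/(1 - w) := by rw [cayleyInv]; field_simp; ring
  rw [cayley, h1, h2, div_div_div_comm, div_self hne, div_one, mul_comm, mul_div_assoc,
    div_self (by simp [Complex.I_ne_zero] : (2:ℂ)*I ≠ 0), mul_one]

lemma cayleyInv_cayley {z : ℂ} (hz : 0 < z.im) : cayleyInv (cayley z) = z := by
  have hne := add_I_ne_zero hz.le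
  have h1 : 1 + cayley z = 2*z/(z + I) := one_add_cayley hne
  have h2 : 1 - cayley z = 2*I/(z + I) := one_sub_cayley hne
  rw [cayleyInv, h1, h2]
  rw [div_eq_iff (by simp [div_eq_zero_iff, Complex.I_ne_zero, hne] :
    (2:ℂ)*I/(z+I) ≠ 0)]
  field_simp

lemma wolff_halfplane {h : ℂ → ℂ}
    (hdiff : DifferentiableOn ℂ h {z : ℂ | 0 < z.im})
    (hmaps : MapsTo h {z : ℂ | 0 < z.im} {z : ℂ | 0 < z.im})
    (hfix : ∀ z, 0 < z.im → h z ≠ z)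
    (hb : ∀ x0 : ℝ, ∃ ζ : ℂ, 0 < ζ.im ∧
      Tendsto (fun ε : ℝ => h ((x0:ℂ) + ε*I)) (𝓝[>] 0) (𝓝 ζ)) :
    ∀ z, 0 < z.im → z.im ≤ (h z).im := by
  have hopen : IsOpen {z : ℂ | 0 < z.im} := isOpen_lt continuous_const Complex.continuous_im
  have hmem : ∀ {u : ℂ}, Complex.abs u < 1 → u ∈ ball (0:ℂ) 1 := fun hu =>
    mem_ball_zero_iff.2 (by simpa [Complex.norm_eq_abs] using hu)
  have habs : ∀ {u : ℂ}, u ∈ ball (0:ℂ) 1 → Complex.abs u < 1 := fun hu => by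
    simpa [Complex.norm_eq_abs] using mem_ball_zero_iff.1 hu
  set φ : ℂ → ℂ := fun w => cayley (h (cayleyInv w)) with hφ
  have hφval : ∀ {w : ℂ}, Complex.abs w < 1 → φ w = cayley (h (cayleyInv w)) := fun _ => rfl
  have hφd : DifferentiableOn ℂ φ (ball 0 1) := by
    intro w hw
    have hw1 : Complex.abs w < 1 := habs hw
    have hne : (1:ℂ) - w ≠ 0 := by
      rw [sub_ne_zero]; intro hh; rw [← hh] at hw1; simp at hw1
    have hzim : 0 < (cayleyInv w).im := cayleyInv_im_pos hw1
    have hd1 : DifferentiableAt ℂ cayleyInv w := by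
      apply DifferentiableAt.div
      · exact (differentiable_const I).differentiableAt.mul
          ((differentiable_const 1).differentiableAt.add differentiable_id.differentiableAt)
      · exact (differentiable_const 1).differentiableAt.sub differentiable_id.differentiableAt
      · exact hne
    have hd2 : DifferentiableAt ℂ h (cayleyInv w) :=
      hdiff.differentiableAt (hopen.mem_nhds hzim)
    have hd3 : DifferentiableAt ℂ cayley (h (cayleyInv w)) := by
      apply DifferentiableAt.div
      · exact differentiable_id.differentiableAt.sub (differentiable_const I).differentiableAt
      · exact differentiable_id.differentiableAt.add (differentiable_const I).differentiableAt
      · exact add_I_ne_zero (hmaps hzim).le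
    exact ((hd3.comp _ hd2).comp _ hd1).differentiableWithinAt
  have hφm : MapsTo φ (ball 0 1) (ball 0 1) := by
    intro w hw
    exact hmem (abs_cayley_lt_one (hmaps (cayleyInv_im_pos (habs hw))))
  have hφfix : ∀ w ∈ ball (0:ℂ) 1, φ w ≠ w := by
    intro w hw heq
    have hw1 := habs hw
    have hzim : 0 < (cayleyInv w).im := cayleyInv_im_pos hw1
    have himh : 0 < (h (cayleyInv w)).im := hmaps hzim
    have := congrArg cayleyInv heq
    rw [cayleyInv_cayley himh] at this
    exact hfix _ hzim (by rw [this])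
  obtain ⟨p, hp1, hineq⟩ := wolff_disc hφd hφm hφfix
  by_cases hpone : p = 1
  · -- horodisk at infinity: Im h z ≥ Im z
    subst hpone
    intro z hz
    have hzI := add_I_ne_zero hz.le
    have hhz : 0 < (h z).im := hmaps hz
    have hhzI := add_I_ne_zero hhz.le
    have hwmem : cayley z ∈ ball (0:ℂ) 1 := hmem (abs_cayley_lt_one hz)
    have hφw : φ (cayley z) = cayley (h z) := by rw [hφ]; simp only []; rw [cayleyInv_cayley hz]
    have := hineq (cayley z) hwmem
    rw [hφw] at this
    have e1 : ∀ u : ℂ, 0 < u.im →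
        Complex.normSq (1 - cayley u) / (1 - Complex.normSq (cayley u)) = 1 / u.im := by
      intro u hu
      have huI := add_I_ne_zero hu.le
      have hnsu : Complex.normSq (u + I) ≠ 0 := by simpa [Complex.normSq_eq_zero] using huI
      rw [one_sub_cayley huI, one_sub_normSq_cayley huI, Complex.normSq_div]
      rw [div_div_div_comm, div_self hnsu, div_one]
      have h2I : Complex.normSq (2*I) = 4 := by
        simp [Complex.normSq_mul]; norm_num
      rw [h2I, div_eq_div_iff (by nlinarith : (4:ℝ)*u.im ≠ 0) hu.ne']
      ring
    rw [e1 z hz, e1 (h z) hhz] at this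
    rw [div_le_div_iff₀ hhz hz] at this
    linarith
  · exfalso
    set x0c : ℂ := cayleyInv p with hx0c
    have hx0im : x0c.im = 0 := by
      rw [hx0c, cayleyInv_im p hpone,
        show Complex.normSq p = 1 from by rw [← Complex.sq_abs, hp1]; norm_num]
      simp
    set x0 : ℝ := x0c.re with hx0
    have hx0c_eq : x0c = ((x0 : ℝ) : ℂ) := by
      apply Complex.ext
      · simp [hx0]
      · simp [hx0im]
    have hcx0 : cayley x0c = p := cayley_cayleyInv hpone
    obtain ⟨ζ, hζim, hζtend⟩ := hb x0
    have hx0I : x0c + I ≠ 0 := add_I_ne_zero (le_of_eq hx0im.symm)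
    set N0 : ℝ := Complex.normSq (x0c + I) with hN0
    have hN0pos : 0 < N0 := Complex.normSq_pos.2 hx0I
    set Lfun : ℂ → ℝ :=
      fun u => Complex.normSq (p - cayley u) / (1 - Complex.normSq (cayley u)) with hLfun
    have hptwise : ∀ ε : ℝ, 0 < ε → Lfun (h ((x0:ℂ) + ε*I)) ≤ ε / N0 := by
      intro ε hε
      set zε : ℂ := (x0:ℂ) + ε*I with hzε
      have hzεim : zε.im = ε := by simp [hzε]
      have hzεpos : 0 < zε.im := by rw [hzεim]; exact hε
      have hzεI : zε + I ≠ 0 := add_I_ne_zero hzεpos.le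
      have hnsε : Complex.normSq (zε + I) ≠ 0 := by
        simpa [Complex.normSq_eq_zero] using hzεI
      have hwmem : cayley zε ∈ ball (0:ℂ) 1 := hmem (abs_cayley_lt_one hzεpos)
      have hφw : φ (cayley zε) = cayley (h zε) := by
        rw [hφ]; simp only []; rw [cayleyInv_cayley hzεpos]
      have hkey := hineq (cayley zε) hwmem
      rw [hφw] at hkey
      have hRHS : Complex.normSq (p - cayley zε) / (1 - Complex.normSq (cayley zε))
          = ε / N0 := by
        have hsub : p - cayley zε = 2*I*(x0c - zε)/((x0c + I)*(zε + I)) := by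
          rw [← hcx0, cayley_sub hx0I hzεI]
        have hdiff : x0c - zε = -(ε:ℂ)*I := by
          rw [hx0c_eq, hzε]; ring
        have hnum : Complex.normSq (p - cayley zε)
            = 4*ε^2/(N0 * Complex.normSq (zε + I)) := by
          rw [hsub, hdiff, Complex.normSq_div, Complex.normSq_mul, Complex.normSq_mul,
            Complex.normSq_mul, hN0]
          simp [Complex.normSq_apply]
          ring
        rw [hnum, one_sub_normSq_cayley hzεI, hzεim, div_div_div_comm]
        have e1 : 4*ε^2/(4*ε) = ε := by field_simp
        have e2 : N0 * Complex.normSq (zε + I) / Complex.normSq (zε + I) = N0 :=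
          mul_div_cancel_right₀ _ hnsε
        rw [e1, e2]
      rw [hLfun]
      simp only []
      rw [← hRHS]
      exact hkey
    have hζI : ζ + I ≠ 0 := add_I_ne_zero hζim.le
    have hζball : Complex.abs (cayley ζ) < 1 := abs_cayley_lt_one hζim
    have hLcont : ContinuousAt Lfun ζ := by
      have hcay : ContinuousAt cayley ζ := by
        apply ContinuousAt.div
        · exact continuous_id.continuousAt.sub continuousAt_const
        · exact continuous_id.continuousAt.add continuousAt_const
        · exact hζI
      apply ContinuousAt.div
      · exact Complex.continuous_normSq.continuousAt.comp
          (continuousAt_const.sub hcay)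
      · exact continuousAt_const.sub (Complex.continuous_normSq.continuousAt.comp hcay)
      · exact (one_sub_normSq_pos hζball).ne'
    have hLtend : Tendsto (fun ε : ℝ => Lfun (h ((x0:ℂ) + ε*I))) (𝓝[>] 0) (𝓝 (Lfun ζ)) :=
      hLcont.tendsto.comp hζtend
    have hRtend : Tendsto (fun ε : ℝ => ε / N0) (𝓝[>] 0) (𝓝 0) := by
      have : Tendsto (fun ε : ℝ => ε / N0) (𝓝 0) (𝓝 (0 / N0)) :=
        (continuous_id.div_const N0).tendsto 0
      rw [zero_div] at this
      exact this.mono_left nhdsWithin_le_nhds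
    have hfinal : Lfun ζ ≤ 0 := by
      apply le_of_tendsto_of_tendsto hLtend hRtend
      filter_upwards [self_mem_nhdsWithin] with ε hε
      exact hptwise ε hε
    have hLpos : 0 < Lfun ζ := by
      rw [hLfun]
      apply div_pos
      · rw [Complex.normSq_pos, sub_ne_zero]
        intro hh
        rw [← hh] at hζball
        rw [hp1] at hζball
        exact lt_irrefl 1 hζball
      · exact one_sub_normSq_pos hζball
    linarith

/-- Let `Ω` be the domain above the graph of a continuous function `g : ℝ → ℝ` and let
`f` be a conformal map of the upper half-plane `ℍ` onto `Ω` extending to a homeomorphism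
of the closures. Then `Re f' > 0` on `ℍ`. -/
theorem re_deriv_pos_of_conformal_onto_graph_domain
    (g : ℝ → ℝ) (hg : Continuous g) (f : ℂ → ℂ)
    (hf : DifferentiableOn ℂ f {z : ℂ | 0 < z.im})
    (hbij : Set.BijOn f {z : ℂ | 0 < z.im} {z : ℂ | g z.re < z.im})
    (F : (closure {z : ℂ | 0 < z.im} : Set ℂ) ≃ₜ (closure {z : ℂ | g z.re < z.im} : Set ℂ))
    (hFf : ∀ z (hz : z ∈ {z : ℂ | 0 < z.im}), (F ⟨z, subset_closure hz⟩ : ℂ) = f z) :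
    ∀ z ∈ {z : ℂ | 0 < z.im}, 0 < (deriv f z).re := by
  classical
  have hΩopen : IsOpen {z : ℂ | g z.re < z.im} :=
    isOpen_lt (hg.comp Complex.continuous_re) Complex.continuous_im
  have hHopen : IsOpen {z : ℂ | 0 < z.im} := isOpen_lt continuous_const Complex.continuous_im
  have hHconv : Convex ℝ {z : ℂ | 0 < z.im} := convex_halfSpace_im_gt 0
  have hHconn : IsPreconnected {z : ℂ | 0 < z.im} := hHconv.isPreconnected
  have hclΩ : closure {z : ℂ | g z.re < z.im} ⊆ {z : ℂ | g z.re ≤ z.im} :=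
    closure_minimal (fun z hz => le_of_lt (show g z.re < z.im from hz))
      (isClosed_le (hg.comp Complex.continuous_re) Complex.continuous_im)
  have hup : ∀ w ∈ closure {z : ℂ | g z.re < z.im}, ∀ t : ℝ, 0 < t →
      w + t*I ∈ {z : ℂ | g z.re < z.im} := by
    intro w hw t ht
    have h1 : g w.re ≤ w.im := hclΩ hw
    have h2 : (w + (t:ℂ)*I).re = w.re := by simp
    have h3 : (w + (t:ℂ)*I).im = w.im + t := by simp
    simp only [mem_setOf_eq, h2, h3]
    linarith
  -- the inverse map
  set finv : ℂ → ℂ := fun w =>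
    if hw : w ∈ closure {z : ℂ | g z.re < z.im} then (F.symm ⟨w, hw⟩ : ℂ) else 0 with hfinv
  have hfinv_eq : ∀ w (hw : w ∈ closure {z : ℂ | g z.re < z.im}),
      finv w = (F.symm ⟨w, hw⟩ : ℂ) := by
    intro w hw; rw [hfinv]; simp only [dif_pos hw]
  have hfinv_f : ∀ z ∈ {z : ℂ | 0 < z.im}, finv (f z) = z := by
    intro z hz
    have h1 : f z ∈ {z : ℂ | g z.re < z.im} := hbij.mapsTo hz
    rw [hfinv_eq (f z) (subset_closure h1)]
    have h2 : F ⟨z, subset_closure hz⟩ = ⟨f z, subset_closure h1⟩ := Subtype.ext (hFf z hz)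
    rw [← h2, Homeomorph.symm_apply_apply]
  have hmemH : ∀ w ∈ {z : ℂ | g z.re < z.im},
      finv w ∈ {z : ℂ | 0 < z.im} ∧ f (finv w) = w := by
    intro w hw
    obtain ⟨z, hz, rfl⟩ := hbij.surjOn hw
    rw [hfinv_f z hz]
    exact ⟨hz, rfl⟩
  have hfinv_cont : ContinuousOn finv (closure {z : ℂ | g z.re < z.im}) := by
    rw [continuousOn_iff_continuous_restrict]
    have hres : domRestrict (closure {z : ℂ | g z.re < z.im}) finv
        = fun w => (F.symm w : ℂ) := by
      funext w
      exact hfinv_eq w w.2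
    rw [hres]
    exact continuous_subtype_val.comp F.symm.continuous
  have hfinv_contAt : ∀ w ∈ {z : ℂ | g z.re < z.im}, ContinuousAt finv w := by
    intro w hw
    exact hfinv_cont.continuousAt (mem_of_superset (hΩopen.mem_nhds hw) subset_closure)
  -- analyticity
  have hfd' : ∀ z ∈ {z : ℂ | 0 < z.im}, DifferentiableAt ℂ f z := fun z hz =>
    hf.differentiableAt (hHopen.mem_nhds hz)
  have hfa : AnalyticOnNhd ℂ f {z : ℂ | 0 < z.im} := hf.analyticOnNhd hHopen
  have hf'a : AnalyticOnNhd ℂ (deriv f) {z : ℂ | 0 < z.im} := hfa.deriv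
  have hIm : (Complex.I ∈ {z : ℂ | 0 < z.im}) := by simp
  have h2Im : ((2*Complex.I) ∈ {z : ℂ | 0 < z.im}) := by simp
  have hfderiv0 : ∀ c : ℂ, ∀ x ∈ {z : ℂ | 0 < z.im}, deriv f x = c →
      fderivWithin ℂ (fun z => f z - c*z) {z : ℂ | 0 < z.im} x = 0 := by
    intro c x hx hdc
    have h2 : HasDerivAt (fun z : ℂ => c*z) c x := by
      simpa using (hasDerivAt_id x).const_mul c
    have h1 : HasDerivAt (fun z => f z - c*z) (deriv f x - c) x :=
      ((hfd' x hx).hasDerivAt).sub h2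
    rw [hdc, sub_self] at h1
    rw [fderivWithin_of_isOpen hHopen hx, h1.hasFDerivAt.fderiv]
    apply ContinuousLinearMap.ext; intro u
    simp
  have hf'ne : ∃ z1 ∈ {z : ℂ | 0 < z.im}, deriv f z1 ≠ 0 := by
    by_contra hcon
    push_neg at hcon
    have hconst : (fun z : ℂ => f z - 0*z) Complex.I = (fun z : ℂ => f z - 0*z) (2*Complex.I) :=
      hHconv.is_const_of_fderivWithin_eq_zero
        (hf.sub ((differentiable_id.const_mul (0:ℂ)).differentiableOn))
        (fun x hx => hfderiv0 0 x hx (hcon x hx)) hIm h2Im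
    simp only [zero_mul, sub_zero] at hconst
    have heqI := hbij.injOn hIm h2Im hconst
    have h2 : (Complex.I).im = (2*Complex.I).im := congrArg Complex.im heqI
    simp at h2
  obtain ⟨z1, hz1, hz1ne⟩ := hf'ne
  -- good points: finv differentiable where deriv f ≠ 0
  have hgoodDiff : ∀ w ∈ {z : ℂ | g z.re < z.im}, deriv f (finv w) ≠ 0 →
      DifferentiableAt ℂ finv w := by
    intro w0 hw0 hne
    obtain ⟨hz0mem, hfz0⟩ := hmemH w0 hw0
    suffices h : HasDerivAt finv (deriv f (finv w0))⁻¹ w0 from h.differentiableAt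
    rw [hasDerivAt_iff_tendsto_slope]
    have hT1 : Tendsto finv (𝓝[≠] w0) (𝓝[≠] (finv w0)) := by
      rw [tendsto_nhdsWithin_iff]
      constructor
      · exact ((hfinv_contAt w0 hw0).tendsto).mono_left nhdsWithin_le_nhds
      · have hev1 : ∀ᶠ x in 𝓝[≠] w0, x ∈ {z : ℂ | g z.re < z.im} :=
          eventually_nhdsWithin_of_eventually_nhds (hΩopen.mem_nhds hw0)
        have hev2 : ∀ᶠ x in 𝓝[≠] w0, x ≠ w0 := by
          filter_upwards [self_mem_nhdsWithin] with x hx using hx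
        filter_upwards [hev1, hev2] with x hx1 hx2
        intro hcontra
        apply hx2
        have := congrArg f hcontra
        rw [(hmemH x hx1).2, hfz0] at this
        exact this
    have hslope : Tendsto (slope f (finv w0)) (𝓝[≠] (finv w0)) (𝓝 (deriv f (finv w0))) :=
      hasDerivAt_iff_tendsto_slope.1 (hfd' _ hz0mem).hasDerivAt
    have hcomp : Tendsto (fun x => slope f (finv w0) (finv x)) (𝓝[≠] w0)
        (𝓝 (deriv f (finv w0))) := hslope.comp hT1
    have hinv := hcomp.inv₀ hne
    apply hinv.congr'
    have hev1 : ∀ᶠ x in 𝓝[≠] w0, x ∈ {z : ℂ | g z.re < z.im} :=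
      eventually_nhdsWithin_of_eventually_nhds (hΩopen.mem_nhds hw0)
    have hev2 : ∀ᶠ x in 𝓝[≠] w0, x ≠ w0 := by
      filter_upwards [self_mem_nhdsWithin] with x hx using hx
    filter_upwards [hev1, hev2] with x hx1 hx2
    rw [slope_def_field, slope_def_field, (hmemH x hx1).2, hfz0, inv_div]
  -- finv is holomorphic on Ω
  have hfinv_diff : DifferentiableOn ℂ finv {z : ℂ | g z.re < z.im} := by
    intro w0 hw0
    by_cases hcase0 : deriv f (finv w0) ≠ 0
    · exact (hgoodDiff w0 hw0 hcase0).differentiableWithinAt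
    · push_neg at hcase0
      obtain ⟨hz0mem, hfz0⟩ := hmemH w0 hw0
      have hana : AnalyticAt ℂ (deriv f) (finv w0) := hf'a _ hz0mem
      rcases hana.eventually_eq_zero_or_eventually_ne_zero with hzero | hnz
      · exfalso
        have heq : EqOn (deriv f) 0 {z : ℂ | 0 < z.im} :=
          hf'a.eqOn_zero_of_preconnected_of_eventuallyEq_zero hHconn hz0mem
            (hzero.mono fun x hx => by simpa using hx)
        exact hz1ne (heq hz1)
      · have hev : ∀ᶠ x in 𝓝 (finv w0), x ≠ finv w0 → deriv f x ≠ 0 := by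
          rw [eventually_nhdsWithin_iff] at hnz
          exact hnz.mono fun x hx hxne => hx hxne
        have hev2 : ∀ᶠ x in 𝓝 w0, finv x ≠ finv w0 → deriv f (finv x) ≠ 0 :=
          (hfinv_contAt w0 hw0).tendsto.eventually hev
        have hV : {x | x ∈ {z : ℂ | g z.re < z.im} ∧
            (finv x ≠ finv w0 → deriv f (finv x) ≠ 0)} ∈ 𝓝 w0 :=
          inter_mem (hΩopen.mem_nhds hw0) hev2
        have hdOn : DifferentiableOn ℂ finv
            ({x | x ∈ {z : ℂ | g z.re < z.im} ∧
              (finv x ≠ finv w0 → deriv f (finv x) ≠ 0)} \ {w0}) := by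
          rintro x ⟨⟨hxΩ, hximp⟩, hxne⟩
          have hxne' : x ≠ w0 := by simpa using hxne
          have hfinvne : finv x ≠ finv w0 := by
            intro hcontra
            apply hxne'
            have := congrArg f hcontra
            rwa [(hmemH x hxΩ).2, hfz0] at this
          exact (hgoodDiff x hxΩ (hximp hfinvne)).differentiableWithinAt
        have := (Complex.differentiableOn_compl_singleton_and_continuousAt_iff hV).1
          ⟨hdOn, hfinv_contAt w0 hw0⟩
        exact (this.differentiableAt hV).differentiableWithinAt
  -- main inequality via Wolff lemma
  have hmain : ∀ t : ℝ, 0 < t → ∀ z ∈ {z : ℂ | 0 < z.im},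
      z.im ≤ (finv (f z + t*I)).im := by
    intro t ht
    set h : ℂ → ℂ := fun z =>
      if hz : z ∈ closure {z : ℂ | 0 < z.im} then finv ((F ⟨z, hz⟩ : ℂ) + t*I) else 0 with hh
    have hcl2 : ∀ z (hz : z ∈ closure {z : ℂ | 0 < z.im}),
        ((F ⟨z, hz⟩ : ℂ) + t*I) ∈ {z : ℂ | g z.re < z.im} :=
      fun z hz => hup _ (F ⟨z, hz⟩).2 t ht
    have hhval : ∀ z (hz : z ∈ closure {z : ℂ | 0 < z.im}),
        h z = finv ((F ⟨z, hz⟩ : ℂ) + t*I) := fun z hz => by rw [hh]; simp only [dif_pos hz]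
    have hagree : ∀ z ∈ {z : ℂ | 0 < z.im}, h z = finv (f z + t*I) := by
      intro z hz
      rw [hhval z (subset_closure hz), hFf z hz]
    have hhmemH : ∀ z (hz : z ∈ closure {z : ℂ | 0 < z.im}), h z ∈ {z : ℂ | 0 < z.im} := by
      intro z hz
      rw [hhval z hz]
      exact (hmemH _ (hcl2 z hz)).1
    have hhdiff : DifferentiableOn ℂ h {z : ℂ | 0 < z.im} := by
      have hd2 : DifferentiableOn ℂ (fun z => finv (f z + t*I)) {z : ℂ | 0 < z.im} := by
        apply DifferentiableOn.comp hfinv_diff (hf.add_const ((t:ℂ)*I))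
        intro z hz
        exact hup _ (subset_closure (hbij.mapsTo hz)) t ht
      exact hd2.congr hagree
    have hhmaps : MapsTo h {z : ℂ | 0 < z.im} {z : ℂ | 0 < z.im} :=
      fun z hz => hhmemH z (subset_closure hz)
    have hhfix : ∀ z, 0 < z.im → h z ≠ z := by
      intro z hz heq
      have h1 : f (h z) = f z + t*I := by
        rw [hagree z hz]
        exact (hmemH _ (hup _ (subset_closure (hbij.mapsTo hz)) t ht)).2
      rw [heq] at h1
      have ht0 : (f z).im = (f z).im + t := by
        have := congrArg Complex.im h1
        simpa using this
      linarith
    have hhb : ∀ x0 : ℝ, ∃ ζ : ℂ, 0 < ζ.im ∧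
        Tendsto (fun ε : ℝ => h ((x0:ℂ) + ε*I)) (𝓝[>] 0) (𝓝 ζ) := by
      intro x0
      have hcurve : Tendsto (fun ε : ℝ => (x0:ℂ) + ε*I) (𝓝 0) (𝓝 ((x0:ℂ))) := by
        have hcc : Continuous (fun ε : ℝ => (x0:ℂ) + ε*I) :=
          continuous_const.add (Complex.continuous_ofReal.mul continuous_const)
        simpa using hcc.tendsto 0
      have hmemcurve : ∀ ε : ℝ, 0 < ε → ((x0:ℂ) + ε*I) ∈ {z : ℂ | 0 < z.im} := by
        intro ε hε
        simp only [mem_setOf_eq, Complex.add_im, Complex.ofReal_im, Complex.mul_im,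
          Complex.ofReal_re, Complex.I_im, Complex.I_re, mul_zero, mul_one, zero_add, add_zero]
        simpa using hε
      have hx0cl : (x0:ℂ) ∈ closure {z : ℂ | 0 < z.im} := by
        apply mem_closure_of_tendsto (b := 𝓝[>] (0:ℝ))
          (hcurve.mono_left nhdsWithin_le_nhds)
        filter_upwards [self_mem_nhdsWithin] with ε hε using hmemcurve ε hε
      refine ⟨h (x0:ℂ), hhmemH _ hx0cl, ?_⟩
      have hHcont : ContinuousOn h (closure {z : ℂ | 0 < z.im}) := by
        rw [continuousOn_iff_continuous_restrict]
        have hres : domRestrict (closure {z : ℂ | 0 < z.im}) h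
            = fun z => finv ((F z : ℂ) + t*I) := by
          funext z; exact hhval z z.2
        rw [hres]
        apply hfinv_cont.comp_continuous
        · exact (continuous_subtype_val.comp F.continuous).add continuous_const
        · intro z; exact subset_closure (hcl2 z z.2)
      have hcw : Tendsto (fun ε : ℝ => (x0:ℂ) + ε*I) (𝓝[>] 0)
          (𝓝[closure {z : ℂ | 0 < z.im}] (x0:ℂ)) := by
        rw [tendsto_nhdsWithin_iff]
        exact ⟨hcurve.mono_left nhdsWithin_le_nhds,
          by filter_upwards [self_mem_nhdsWithin] with ε hε
             exact subset_closure (hmemcurve ε hε)⟩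
      exact ((hHcont.continuousWithinAt hx0cl).tendsto).comp hcw
    intro z hz
    have hres := wolff_halfplane hhdiff hhmaps hhfix hhb z hz
    rwa [hagree z hz] at hres
  -- nonnegativity of Re f'
  have hge : ∀ z ∈ {z : ℂ | 0 < z.im}, 0 ≤ (deriv f z).re := by
    intro z0 hz0
    have hw0 : f z0 ∈ {z : ℂ | g z.re < z.im} := hbij.mapsTo hz0
    have hcurve : Tendsto (fun t : ℝ => f z0 + t*I) (𝓝[>] 0) (𝓝 (f z0)) := by
      have hcc : Continuous (fun t : ℝ => f z0 + t*I) :=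
        continuous_const.add (Complex.continuous_ofReal.mul continuous_const)
      have h0 := hcc.tendsto 0
      simp only [Complex.ofReal_zero, zero_mul, add_zero] at h0
      exact h0.mono_left nhdsWithin_le_nhds
    have htend : Tendsto (fun t : ℝ => finv (f z0 + t*I)) (𝓝[>] 0) (𝓝 z0) := by
      have hcmp := (hfinv_contAt _ hw0).tendsto.comp hcurve
      rwa [hfinv_f z0 hz0] at hcmp
    have hne2 : ∀ t : ℝ, 0 < t → finv (f z0 + t*I) ≠ z0 := by
      intro t ht heq
      have h1 : f (finv (f z0 + t*I)) = f z0 + t*I :=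
        (hmemH _ (hup _ (subset_closure hw0) t ht)).2
      rw [heq] at h1
      have ht0 : (f z0).im = (f z0).im + t := by
        have := congrArg Complex.im h1.symm
        simpa using this
      linarith
    have hT : Tendsto (fun t : ℝ => finv (f z0 + t*I)) (𝓝[>] 0) (𝓝[≠] z0) := by
      rw [tendsto_nhdsWithin_iff]
      exact ⟨htend, by filter_upwards [self_mem_nhdsWithin] with t ht using hne2 t ht⟩
    have hslope : Tendsto (slope f z0) (𝓝[≠] z0) (𝓝 (deriv f z0)) :=
      hasDerivAt_iff_tendsto_slope.1 (hfd' z0 hz0).hasDerivAt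
    have hRe : Tendsto (fun t : ℝ => (slope f z0 (finv (f z0 + t*I))).re) (𝓝[>] 0)
        (𝓝 ((deriv f z0).re)) := (Complex.continuous_re.tendsto _).comp (hslope.comp hT)
    apply ge_of_tendsto hRe
    filter_upwards [self_mem_nhdsWithin] with t ht
    have hmem2 := hup _ (subset_closure hw0) t ht
    have himge := hmain t ht z0 hz0
    have hfu : f (finv (f z0 + t*I)) = f z0 + t*I := (hmemH _ hmem2).2
    rw [slope_def_field, hfu]
    have he : f z0 + (t:ℂ)*I - f z0 = (t:ℂ)*I := by ring
    rw [he, Complex.div_re]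
    have h1 : ((t:ℂ)*I).re = 0 := by simp
    have h2 : ((t:ℂ)*I).im = t := by simp
    rw [h1, h2]
    have h3 : 0 ≤ (finv (f z0 + t*I) - z0).im := by
      rw [Complex.sub_im]; linarith
    have h4 : 0 ≤ t * (finv (f z0 + t*I) - z0).im / Complex.normSq (finv (f z0 + t*I) - z0) :=
      div_nonneg (mul_nonneg ht.le h3) (Complex.normSq_nonneg _)
    rw [zero_mul, zero_div, zero_add]
    exact h4
  -- strict positivity
  intro z0 hz0
  by_contra hlt
  have hre0 : (deriv f z0).re = 0 := le_antisymm (not_lt.1 hlt) (hge z0 hz0)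
  rcases hf'a.is_constant_or_isOpen hHconn with ⟨c, hc⟩ | hopen2
  · have hcz0 : deriv f z0 = c := hc z0 hz0
    have hcre : c.re = 0 := by rw [← hcz0]; exact hre0
    have haff : ∀ z ∈ {z : ℂ | 0 < z.im},
        (fun w : ℂ => f w - c*w) z = (fun w : ℂ => f w - c*w) Complex.I := by
      intro z hz
      exact hHconv.is_const_of_fderivWithin_eq_zero
        (hf.sub ((differentiable_id.const_mul c).differentiableOn))
        (fun x hx => hfderiv0 c x hx (hc x hx)) hz hIm
    by_cases hc0 : c = 0
    · have h1 := haff (2*Complex.I) h2Im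
      simp only [hc0, zero_mul, sub_zero] at h1
      have heqI := hbij.injOn h2Im hIm h1
      have h2 : (2*Complex.I).im = (Complex.I).im := congrArg Complex.im heqI
      simp at h2
    · set k : ℝ := c.im with hk
      have hkne : k ≠ 0 := by
        intro h0
        apply hc0
        apply Complex.ext
        · exact hcre
        · exact h0
      set d : ℂ := f Complex.I - c*Complex.I with hd
      set x : ℝ := (g (d.re - k) - 1 - d.im)/k with hx
      set z2 : ℂ := (x:ℂ) + Complex.I with hz2
      have hz2mem : z2 ∈ {z : ℂ | 0 < z.im} := by
        simp only [mem_setOf_eq, hz2, Complex.add_im, Complex.ofReal_im, Complex.I_im]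
        norm_num
      have hfz2 : f z2 = c*z2 + d := by
        have haf := haff z2 hz2mem
        simp only [] at haf
        rw [hd]
        linear_combination haf
      have hz2re : z2.re = x := by simp [hz2]
      have hz2im : z2.im = 1 := by simp [hz2]
      have hre2 : (f z2).re = d.re - k := by
        rw [hfz2, Complex.add_re, Complex.mul_re, hz2re, hz2im, hcre, ← hk]
        ring
      have him2 : (f z2).im = g (d.re - k) - 1 := by
        rw [hfz2, Complex.add_im, Complex.mul_im, hz2re, hz2im, hcre, ← hk]
        rw [hx]
        field_simp
        ring
      have hmem4 := hbij.mapsTo hz2mem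
      rw [mem_setOf_eq, hre2, him2] at hmem4
      linarith
  · have himg : IsOpen (deriv f '' {z : ℂ | 0 < z.im}) := hopen2 _ subset_rfl hHopen
    have hmem3 : deriv f z0 ∈ deriv f '' {z : ℂ | 0 < z.im} := ⟨z0, hz0, rfl⟩
    obtain ⟨ε, hε, hball⟩ := Metric.isOpen_iff.1 himg _ hmem3
    have hpt : deriv f z0 - ((ε/2 : ℝ) : ℂ) ∈ ball (deriv f z0) ε := by
      rw [mem_ball, dist_eq_norm]
      have : deriv f z0 - ((ε/2:ℝ):ℂ) - deriv f z0 = -((ε/2:ℝ):ℂ) := by ring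
      rw [this]
      rw [norm_neg, Complex.norm_real, Real.norm_eq_abs, abs_of_pos (by linarith)]
      linarith
    obtain ⟨z3, hz3, hz3eq⟩ := hball hpt
    have hge3 := hge z3 hz3
    rw [hz3eq, Complex.sub_re, hre0, Complex.ofReal_re] at hge3
    linarith

end
end
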